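/- arXiv:1504.00048 — 4 statements merged into one kernel-verified Lean document; each statement's English description precedes it below -/
import Mathlib

section
/- Let σ:Σ→Σ be a topological Markov shift and r:Σ→(0,∞) a Hölder continuous roof function bounded away from zero and infinity. Then the Bowen–Walters function d_1 (defined as the infimum of lengths of basic paths) is a metric on the unit suspension space Σ_1 = {(x,t) : x∈Σ, 0≤t<1}, and consequently d_r(z,w) := d_1(ϑ_r(z),ϑ_r(w)), where ϑ_r(x,t) = (x, t/r(x)), is a metric on Σ_r = {(x,t) : x∈Σ, 0≤t<r(x)}. -/
open MeasureTheory Filter Set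
open scoped Classical

structure MarkovGraph where
  V : Type
  E : V → V → Prop
  countableV : Countable V
  in_edge : ∀ v, ∃ u, E u v
  out_edge : ∀ v, ∃ w, E v w

namespace MarkovGraph

variable (G : MarkovGraph)

/-- The two-sided path space of the graph. -/
def Space : Type := {x : ℤ → G.V // ∀ i, G.E (x i) (x (i + 1))}

/-- The left shift, as a bijection of the path space. -/
def shift : Equiv.Perm G.Space where
  toFun x := ⟨fun i => x.1 (i + 1), fun i => x.2 (i + 1)⟩
  invFun x := ⟨fun i => x.1 (i - 1), fun i => by
    have h := x.2 (i - 1)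
    have e1 : i - 1 + 1 = i + 1 - 1 := by ring
    rwa [e1] at h⟩
  left_inv x := Subtype.ext (funext fun i => by simp)
  right_inv x := Subtype.ext (funext fun i => by simp)

/-- The metric d(x,y) = exp(-min{|n| : x_n ≠ y_n}). -/
noncomputable def dist0 (x y : G.Space) : ℝ :=
  if x = y then 0
  else Real.exp (-(sInf {t : ℝ | ∃ n : ℤ, x.1 n ≠ y.1 n ∧ t = |(n : ℝ)|}))

/-- Hölder continuity with respect to `dist0`. -/
def HolderFun (f : G.Space → ℝ) : Prop :=
  ∃ C : ℝ, 0 < C ∧ ∃ α : ℝ, 0 < α ∧ α ≤ 1 ∧ ∀ x y, |f x - f y| ≤ C * dist0 G x y ^ α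

/-- Birkhoff sums `r_n` for `n : ℤ`. -/
noncomputable def birkhoff (r : G.Space → ℝ) (n : ℤ) (x : G.Space) : ℝ :=
  if 0 ≤ n then ∑ i ∈ Finset.range n.toNat, r ((G.shift ^ (i : ℤ)) x)
  else -∑ i ∈ Finset.range (-n).toNat, r ((G.shift ^ ((i : ℤ) - (-n).toNat)) x)

/-- The suspension space Σ_r = {(x,t) : 0 ≤ t < r(x)}. -/
def Susp (r : G.Space → ℝ) : Type := {p : G.Space × ℝ // 0 ≤ p.2 ∧ p.2 < r p.1}

/-- Defining property of the topological Markov flow with roof `r`. -/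
def IsTMFlow (r : G.Space → ℝ) (Φ : ℝ → G.Susp r → G.Susp r) : Prop :=
  ∀ τ p, ∃ n : ℤ, ((Φ τ p).1.1 = (G.shift ^ n) p.1.1) ∧
    ((Φ τ p).1.2 = p.1.2 + τ - birkhoff G r n p.1.1)

end MarkovGraph
namespace MarkovGraph

variable (G : MarkovGraph)

/-- The unit-roof suspension flow ψ on Σ_1. -/
noncomputable def unitFlow (t : ℝ) (p : G.Susp (fun _ => (1 : ℝ))) :
    G.Susp (fun _ => (1 : ℝ)) :=
  ⟨((G.shift ^ ⌊p.1.2 + t⌋) p.1.1, Int.fract (p.1.2 + t)),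
    Int.fract_nonneg _, Int.fract_lt_one _⟩

/-- Horizontal segments: ordered pairs with the same height. -/
def IsHoriz (z w : G.Susp (fun _ => (1 : ℝ))) : Prop := z.1.2 = w.1.2

/-- Length of a horizontal segment. -/
noncomputable def horizLength (z w : G.Susp (fun _ => (1 : ℝ))) : ℝ :=
  (1 - z.1.2) * dist0 G z.1.1 w.1.1 + z.1.2 * dist0 G (G.shift z.1.1) (G.shift w.1.1)

/-- Vertical segments: ordered pairs lying on the same flow line. -/
def IsVert (z w : G.Susp (fun _ => (1 : ℝ))) : Prop := ∃ t : ℝ, unitFlow G t z = w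

/-- Length of a vertical segment: min{|t| > 0 : ψ^t(z) = w}. -/
noncomputable def vertLength (z w : G.Susp (fun _ => (1 : ℝ))) : ℝ :=
  sInf {s : ℝ | 0 < s ∧ ∃ t : ℝ, |t| = s ∧ unitFlow G t z = w}

/-- `PathLen z w ℓ` holds iff there is a basic path from `z` to `w` of length `ℓ`. -/
inductive PathLen : G.Susp (fun _ => (1 : ℝ)) → G.Susp (fun _ => (1 : ℝ)) → ℝ → Prop
  | horiz {z w} (h : IsHoriz G z w) : PathLen z w (horizLength G z w)
  | vert {z w} (h : IsVert G z w) : PathLen z w (vertLength G z w)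
  | comp {z w u : G.Susp (fun _ => (1 : ℝ))} {a b : ℝ} :
      PathLen z w a → PathLen w u b → PathLen z u (a + b)

/-- The Bowen–Walters function d_1 : infimum of lengths of basic paths. -/
noncomputable def d1 (z w : G.Susp (fun _ => (1 : ℝ))) : ℝ :=
  sInf {ℓ : ℝ | PathLen G z w ℓ}

/-- The canonical map ϑ_r : Σ_r → Σ_1, ϑ_r(x,t) = (x, t/r(x)). -/
noncomputable def thetaR (r : G.Space → ℝ) (p : G.Susp r) : G.Susp (fun _ => (1 : ℝ)) :=
  if h : 0 < r p.1.1 then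
    ⟨(p.1.1, p.1.2 / r p.1.1), div_nonneg p.2.1 h.le, (div_lt_one h).2 p.2.2⟩
  else ⟨(p.1.1, 0), by norm_num⟩

/-- The Bowen–Walters function d_r on Σ_r. -/
noncomputable def dr (r : G.Space → ℝ) (z w : G.Susp r) : ℝ :=
  d1 G (thetaR G r z) (thetaR G r w)

-- ===== auxiliary lemmas on dist0 =====

lemma dist0_nonneg (x y : G.Space) : 0 ≤ dist0 G x y := by
  unfold dist0; split
  · exact le_refl 0
  · exact (Real.exp_pos _).le

lemma dist0_self (x : G.Space) : dist0 G x x = 0 := by simp [dist0]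

lemma dist0_comm (x y : G.Space) : dist0 G x y = dist0 G y x := by
  unfold dist0
  by_cases h : x = y
  · simp [h]
  · rw [if_neg h, if_neg (Ne.symm h)]
    have : {t : ℝ | ∃ n : ℤ, x.1 n ≠ y.1 n ∧ t = |(n : ℝ)|}
        = {t : ℝ | ∃ n : ℤ, y.1 n ≠ x.1 n ∧ t = |(n : ℝ)|} := by
      ext t
      exact ⟨fun ⟨n, hn, ht⟩ => ⟨n, hn.symm, ht⟩, fun ⟨n, hn, ht⟩ => ⟨n, hn.symm, ht⟩⟩
    rw [this]

lemma dist0_pos_of_ne {x y : G.Space} (h : x ≠ y) : 0 < dist0 G x y := by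
  unfold dist0; rw [if_neg h]; exact Real.exp_pos _

lemma dist0_eq_zero_iff (x y : G.Space) : dist0 G x y = 0 ↔ x = y := by
  constructor
  · intro h
    by_contra hne
    exact (dist0_pos_of_ne G hne).ne' h
  · rintro rfl; exact dist0_self G x

lemma exp_le_dist0 {x y : G.Space} (n : ℤ) (h : x.1 n ≠ y.1 n) :
    Real.exp (-|(n : ℝ)|) ≤ dist0 G x y := by
  have hxy : x ≠ y := fun he => h (by rw [he])
  unfold dist0; rw [if_neg hxy]
  apply Real.exp_le_exp.2
  apply neg_le_neg
  apply csInf_le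
  · exact ⟨0, fun t ⟨m, _, ht⟩ => ht ▸ abs_nonneg _⟩
  · exact ⟨n, h, rfl⟩

lemma dist0_le_one (x y : G.Space) : dist0 G x y ≤ 1 := by
  unfold dist0; split
  · norm_num
  · rw [← Real.exp_zero]
    apply Real.exp_le_exp.2
    simp only [neg_le, neg_zero]
    exact Real.sInf_nonneg (fun t ⟨m, _, ht⟩ => ht ▸ abs_nonneg _)


-- ===== flow lemmas =====

lemma shift_zpow_apply (a b : ℤ) (x : G.Space) :
    (G.shift ^ a) ((G.shift ^ b) x) = (G.shift ^ (a + b)) x := by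
  rw [zpow_add, Equiv.Perm.mul_apply]

lemma shift_coord (x : G.Space) (n : ℤ) : (G.shift x).1 n = x.1 (n + 1) := rfl

lemma shift_inv_coord (x : G.Space) (n : ℤ) : (G.shift⁻¹ x).1 n = x.1 (n - 1) := rfl

lemma shift_zpow_coord (k : ℤ) : ∀ (x : G.Space) (n : ℤ),
    ((G.shift ^ k) x).1 n = x.1 (n + k) := by
  induction k using Int.induction_on with
  | zero => intro x n; simp
  | succ m ih =>
      intro x n
      have h1 : (G.shift ^ ((m : ℤ) + 1)) x = (G.shift ^ (m : ℤ)) (G.shift x) := by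
        rw [zpow_add_one, Equiv.Perm.mul_apply]
      rw [h1, ih, shift_coord]
      ring_nf
  | pred m ih =>
      intro x n
      have h1 : (G.shift ^ (-(m : ℤ) - 1)) x = (G.shift ^ (-(m : ℤ))) (G.shift⁻¹ x) := by
        rw [zpow_sub_one, Equiv.Perm.mul_apply]
      rw [h1, ih, shift_inv_coord]
      ring_nf

lemma unitFlow_fst (t : ℝ) (p : G.Susp (fun _ => (1 : ℝ))) :
    (unitFlow G t p).1.1 = (G.shift ^ ⌊p.1.2 + t⌋) p.1.1 := rfl

lemma unitFlow_snd (t : ℝ) (p : G.Susp (fun _ => (1 : ℝ))) :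
    (unitFlow G t p).1.2 = Int.fract (p.1.2 + t) := rfl

lemma susp_snd_lt_one (p : G.Susp (fun _ => (1 : ℝ))) : p.1.2 < 1 := p.2.2

lemma susp_snd_nonneg (p : G.Susp (fun _ => (1 : ℝ))) : 0 ≤ p.1.2 := p.2.1

lemma unitFlow_zero (p : G.Susp (fun _ => (1 : ℝ))) : unitFlow G 0 p = p := by
  apply Subtype.ext
  apply Prod.ext
  · show ((G.shift ^ ⌊p.1.2 + 0⌋) p.1.1) = p.1.1
    have : ⌊p.1.2 + 0⌋ = 0 := by
      rw [add_zero]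
      exact Int.floor_eq_zero_iff.2 ⟨p.2.1, p.2.2⟩
    rw [this]; simp
  · show Int.fract (p.1.2 + 0) = p.1.2
    rw [add_zero]
    exact Int.fract_eq_self.2 ⟨p.2.1, p.2.2⟩

lemma unitFlow_add (s t : ℝ) (p : G.Susp (fun _ => (1 : ℝ))) :
    unitFlow G s (unitFlow G t p) = unitFlow G (t + s) p := by
  apply Subtype.ext
  apply Prod.ext
  · show (G.shift ^ ⌊Int.fract (p.1.2 + t) + s⌋) ((G.shift ^ ⌊p.1.2 + t⌋) p.1.1)
        = (G.shift ^ ⌊p.1.2 + (t + s)⌋) p.1.1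
    rw [shift_zpow_apply]
    congr 1
    have : Int.fract (p.1.2 + t) + s = (p.1.2 + (t + s)) - (⌊p.1.2 + t⌋ : ℤ) := by
      rw [Int.fract]; push_cast; ring
    rw [this, Int.floor_sub_intCast]
    ring
  · show Int.fract (Int.fract (p.1.2 + t) + s) = Int.fract (p.1.2 + (t + s))
    have : Int.fract (p.1.2 + t) + s = (p.1.2 + (t + s)) - (⌊p.1.2 + t⌋ : ℤ) := by
      rw [Int.fract]; push_cast; ring
    rw [this, Int.fract_sub_intCast]

lemma isVert_symm {z w : G.Susp (fun _ => (1 : ℝ))} (h : IsVert G z w) : IsVert G w z := by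
  obtain ⟨t, ht⟩ := h
  exact ⟨-t, by rw [← ht, unitFlow_add, add_neg_cancel, unitFlow_zero]⟩

lemma vertLength_comm (z w : G.Susp (fun _ => (1 : ℝ))) :
    vertLength G z w = vertLength G w z := by
  unfold vertLength
  congr 1
  ext s
  constructor
  · rintro ⟨hs, t, ht, hf⟩
    exact ⟨hs, -t, by rw [abs_neg]; exact ht,
      by rw [← hf, unitFlow_add, add_neg_cancel, unitFlow_zero]⟩
  · rintro ⟨hs, t, ht, hf⟩
    exact ⟨hs, -t, by rw [abs_neg]; exact ht,
      by rw [← hf, unitFlow_add, add_neg_cancel, unitFlow_zero]⟩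


-- ===== nonnegativity and existence of paths =====

lemma horizLength_nonneg (z w : G.Susp (fun _ => (1 : ℝ))) : 0 ≤ horizLength G z w := by
  unfold horizLength
  have h1 := susp_snd_nonneg G z
  have h2 := susp_snd_lt_one G z
  have := dist0_nonneg G z.1.1 w.1.1
  have := dist0_nonneg G (G.shift z.1.1) (G.shift w.1.1)
  nlinarith

lemma vertLength_nonneg (z w : G.Susp (fun _ => (1 : ℝ))) : 0 ≤ vertLength G z w :=
  Real.sInf_nonneg (fun s hs => hs.1.le)

lemma pathLen_nonneg {z w : G.Susp (fun _ => (1 : ℝ))} {ℓ : ℝ}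
    (h : PathLen G z w ℓ) : 0 ≤ ℓ := by
  induction h with
  | horiz _ => exact horizLength_nonneg G _ _
  | vert _ => exact vertLength_nonneg G _ _
  | comp _ _ iha ihb => exact add_nonneg iha ihb

/-- midpoint used to build a path from z to w -/
def midpt (z w : G.Susp (fun _ => (1 : ℝ))) : G.Susp (fun _ => (1 : ℝ)) :=
  ⟨(w.1.1, z.1.2), z.2⟩

lemma isHoriz_midpt (z w : G.Susp (fun _ => (1 : ℝ))) : IsHoriz G z (midpt G z w) := rfl

lemma isVert_midpt (z w : G.Susp (fun _ => (1 : ℝ))) : IsVert G (midpt G z w) w := by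
  refine ⟨w.1.2 - z.1.2, ?_⟩
  apply Subtype.ext
  apply Prod.ext
  · show (G.shift ^ ⌊z.1.2 + (w.1.2 - z.1.2)⌋) w.1.1 = w.1.1
    have : z.1.2 + (w.1.2 - z.1.2) = w.1.2 := by ring
    rw [this, Int.floor_eq_zero_iff.2 ⟨susp_snd_nonneg G w, susp_snd_lt_one G w⟩]
    simp
  · show Int.fract (z.1.2 + (w.1.2 - z.1.2)) = w.1.2
    have : z.1.2 + (w.1.2 - z.1.2) = w.1.2 := by ring
    rw [this]
    exact Int.fract_eq_self.2 ⟨susp_snd_nonneg G w, susp_snd_lt_one G w⟩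

lemma exists_pathLen (z w : G.Susp (fun _ => (1 : ℝ))) : ∃ ℓ, PathLen G z w ℓ :=
  ⟨_, PathLen.comp (PathLen.horiz (isHoriz_midpt G z w)) (PathLen.vert (isVert_midpt G z w))⟩

lemma pathSet_nonempty (z w : G.Susp (fun _ => (1 : ℝ))) :
    {ℓ : ℝ | PathLen G z w ℓ}.Nonempty := exists_pathLen G z w

lemma pathSet_bddBelow (z w : G.Susp (fun _ => (1 : ℝ))) :
    BddBelow {ℓ : ℝ | PathLen G z w ℓ} := ⟨0, fun ℓ hℓ => pathLen_nonneg G hℓ⟩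

lemma d1_nonneg (z w : G.Susp (fun _ => (1 : ℝ))) : 0 ≤ d1 G z w :=
  le_csInf (pathSet_nonempty G z w) (fun ℓ hℓ => pathLen_nonneg G hℓ)

lemma d1_self (z : G.Susp (fun _ => (1 : ℝ))) : d1 G z z = 0 := by
  apply le_antisymm
  · have h : PathLen G z z (horizLength G z z) := PathLen.horiz rfl
    calc d1 G z z ≤ horizLength G z z := csInf_le (pathSet_bddBelow G z z) h
    _ = 0 := by unfold horizLength; rw [dist0_self, dist0_self]; ring
  · exact d1_nonneg G z z

-- symmetry
lemma pathLen_symm {z w : G.Susp (fun _ => (1 : ℝ))} {ℓ : ℝ}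
    (h : PathLen G z w ℓ) : PathLen G w z ℓ := by
  induction h with
  | @horiz z w h =>
      have he : horizLength G z w = horizLength G w z := by
        unfold horizLength
        rw [dist0_comm G z.1.1, dist0_comm G (G.shift z.1.1), IsHoriz] at *
        rw [h]
      rw [he]
      exact PathLen.horiz h.symm
  | @vert z w h =>
      rw [vertLength_comm]
      exact PathLen.vert (isVert_symm G h)
  | @comp z w u a b _ _ iha ihb =>
      rw [add_comm]
      exact PathLen.comp ihb iha

lemma d1_comm (z w : G.Susp (fun _ => (1 : ℝ))) : d1 G z w = d1 G w z := by
  unfold d1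
  congr 1
  ext ℓ
  exact ⟨fun h => pathLen_symm G h, fun h => pathLen_symm G h⟩

lemma d1_triangle (z w u : G.Susp (fun _ => (1 : ℝ))) :
    d1 G z u ≤ d1 G z w + d1 G w u := by
  have key : ∀ a ∈ {ℓ : ℝ | PathLen G z w ℓ}, ∀ b ∈ {ℓ : ℝ | PathLen G w u ℓ},
      d1 G z u ≤ a + b := fun a ha b hb =>
    csInf_le (pathSet_bddBelow G z u) (PathLen.comp ha hb)
  have h1 : ∀ a ∈ {ℓ : ℝ | PathLen G z w ℓ}, d1 G z u - a ≤ d1 G w u := by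
    intro a ha
    apply le_csInf (pathSet_nonempty G w u)
    intro b hb
    linarith [key a ha b hb]
  have h2 : d1 G z u - d1 G w u ≤ d1 G z w := by
    apply le_csInf (pathSet_nonempty G z w)
    intro a ha
    linarith [h1 a ha]
  linarith

/-- Main comparison lemma: any "pseudometric" dominated by segment lengths is ≤ d1. -/
lemma le_d1 (D : G.Susp (fun _ => (1 : ℝ)) → G.Susp (fun _ => (1 : ℝ)) → ℝ)
    (htri : ∀ a b c, D a c ≤ D a b + D b c)
    (hh : ∀ z w, IsHoriz G z w → D z w ≤ horizLength G z w)
    (hv : ∀ z w, IsVert G z w → D z w ≤ vertLength G z w)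
    (z w : G.Susp (fun _ => (1 : ℝ))) : D z w ≤ d1 G z w := by
  apply le_csInf (pathSet_nonempty G z w)
  intro ℓ hℓ
  induction hℓ with
  | horiz h => exact hh _ _ h
  | vert h => exact hv _ _ h
  | @comp z w u a b _ _ iha ihb =>
      calc D z u ≤ D z w + D w u := htri z w u
      _ ≤ a + b := add_le_add iha ihb


-- ===== the height pseudometric (circle distance) =====

lemma norm_addCircle_le (x : ℝ) : ‖((x : ℝ) : AddCircle (1 : ℝ))‖ ≤ |x| := by
  rw [AddCircle.norm_eq]
  calc |x - round ((1:ℝ)⁻¹ * x) * 1| = |x - round x| := by norm_num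
  _ ≤ |x - ((0 : ℤ) : ℝ)| := round_le x 0
  _ = |x| := by norm_num

lemma coe_fract_addCircle (a : ℝ) :
    ((Int.fract a : ℝ) : AddCircle (1 : ℝ)) = ((a : ℝ) : AddCircle (1 : ℝ)) := by
  rw [Int.fract, QuotientAddGroup.mk_sub]
  have : (((⌊a⌋ : ℝ)) : AddCircle (1 : ℝ)) = 0 :=
    (QuotientAddGroup.eq_zero_iff _).2 (AddSubgroup.intCast_mem_zmultiples_one ⌊a⌋)
  rw [this, sub_zero]

/-- height pseudometric -/
noncomputable def Dh (z w : G.Susp (fun _ => (1 : ℝ))) : ℝ :=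
  dist ((z.1.2 : ℝ) : AddCircle (1 : ℝ)) ((w.1.2 : ℝ) : AddCircle (1 : ℝ))

lemma Dh_le_d1 (z w : G.Susp (fun _ => (1 : ℝ))) : Dh G z w ≤ d1 G z w := by
  apply le_d1
  · intro a b c; exact dist_triangle _ _ _
  · intro a b h
    unfold Dh
    rw [show a.1.2 = b.1.2 from h, dist_self]
    exact horizLength_nonneg G a b
  · intro a b h
    obtain ⟨t0, ht0⟩ := h
    by_cases h0 : t0 = 0
    · subst h0
      rw [unitFlow_zero] at ht0
      subst ht0
      unfold Dh
      rw [dist_self]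
      exact vertLength_nonneg G a a
    · unfold vertLength
      have hne : {s : ℝ | 0 < s ∧ ∃ t : ℝ, |t| = s ∧ unitFlow G t a = b}.Nonempty :=
        ⟨|t0|, abs_pos.2 h0, t0, rfl, ht0⟩
      apply le_csInf hne
      rintro s ⟨hs, t, ht, hf⟩
      have hb : b.1.2 = Int.fract (a.1.2 + t) := by rw [← hf]; rfl
      unfold Dh
      rw [hb, coe_fract_addCircle, dist_eq_norm, ← QuotientAddGroup.mk_sub]
      calc ‖((a.1.2 - (a.1.2 + t) : ℝ) : AddCircle (1:ℝ))‖ ≤ |a.1.2 - (a.1.2 + t)| :=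
        norm_addCircle_le _
      _ = |t| := by rw [show a.1.2 - (a.1.2 + t) = -t by ring, abs_neg]
      _ = s := ht

lemma height_eq_of_d1_eq_zero {z w : G.Susp (fun _ => (1 : ℝ))}
    (h : d1 G z w = 0) : z.1.2 = w.1.2 := by
  have h1 : Dh G z w ≤ 0 := h ▸ Dh_le_d1 G z w
  have h2 : Dh G z w = 0 := le_antisymm h1 dist_nonneg
  have h3 : ((z.1.2 : ℝ) : AddCircle (1 : ℝ)) = ((w.1.2 : ℝ) : AddCircle (1 : ℝ)) :=
    dist_eq_zero.1 h2
  have hz : z.1.2 ∈ Set.Ico (0 : ℝ) (0 + 1) := by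
    rw [zero_add]; exact ⟨susp_snd_nonneg G z, susp_snd_lt_one G z⟩
  have hw : w.1.2 ∈ Set.Ico (0 : ℝ) (0 + 1) := by
    rw [zero_add]; exact ⟨susp_snd_nonneg G w, susp_snd_lt_one G w⟩
  exact (AddCircle.coe_eq_coe_iff_of_mem_Ico hz hw).1 h3


-- ===== indicator features =====

noncomputable def chi (P : Prop) : ℝ := if P then 1 else 0

lemma chi_nonneg (P : Prop) : 0 ≤ chi P := by unfold chi; split <;> norm_num

lemma chi_le_one (P : Prop) : chi P ≤ 1 := by unfold chi; split <;> norm_num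

lemma abs_chi_sub_chi_le_one (P Q : Prop) : |chi P - chi Q| ≤ 1 := by
  rw [abs_le]
  constructor <;> [linarith [chi_nonneg P, chi_le_one Q]; linarith [chi_le_one P, chi_nonneg Q]]

lemma chi_eq_one_iff (P : Prop) : chi P = 1 ↔ P := by
  unfold chi; split <;> simp_all

/-- Generic comparison: a function whose increments along horizontal segments are bounded
by their length, and along the flow by the elapsed time, is 1-Lipschitz w.r.t. d1. -/
lemma feat_le_d1 (f : G.Susp (fun _ => (1 : ℝ)) → ℝ)
    (hh : ∀ z w, IsHoriz G z w → |f z - f w| ≤ horizLength G z w)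
    (hv : ∀ (z : G.Susp (fun _ => (1 : ℝ))) (u : ℝ), |f z - f (unitFlow G u z)| ≤ |u|)
    (z w : G.Susp (fun _ => (1 : ℝ))) : |f z - f w| ≤ d1 G z w := by
  apply le_d1 G (fun a b => |f a - f b|)
  · intro a b c
    calc |f a - f c| = |(f a - f b) + (f b - f c)| := by ring_nf
    _ ≤ |f a - f b| + |f b - f c| := abs_add_le _ _
  · exact hh
  · intro a b h
    obtain ⟨t0, ht0⟩ := h
    by_cases h0 : t0 = 0
    · subst h0
      rw [unitFlow_zero] at ht0
      subst ht0
      simp only [sub_self, abs_zero]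
      exact vertLength_nonneg G a a
    · unfold vertLength
      have hne : {s : ℝ | 0 < s ∧ ∃ t : ℝ, |t| = s ∧ unitFlow G t a = b}.Nonempty :=
        ⟨|t0|, abs_pos.2 h0, t0, rfl, ht0⟩
      apply le_csInf hne
      rintro s ⟨hs, t, ht, hf⟩
      rw [← hf, ← ht]
      exact hv a t

lemma key_ind (x y : G.Space) (n : ℤ) (v : G.V) :
    |chi (x.1 n = v) - chi (y.1 n = v)| * Real.exp (-|(n : ℝ)|) ≤ dist0 G x y := by
  by_cases h : x.1 n = y.1 n
  · rw [h, sub_self, abs_zero, zero_mul]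
    exact dist0_nonneg G x y
  · calc |chi (x.1 n = v) - chi (y.1 n = v)| * Real.exp (-|(n : ℝ)|)
        ≤ 1 * Real.exp (-|(n : ℝ)|) :=
          mul_le_mul_of_nonneg_right (abs_chi_sub_chi_le_one _ _) (Real.exp_pos _).le
    _ = Real.exp (-|(n : ℝ)|) := one_mul _
    _ ≤ dist0 G x y := exp_le_dist0 G n h

/-- The affine feature family. -/
noncomputable def featA (n : ℤ) (v : G.V) (z : G.Susp (fun _ => (1 : ℝ))) : ℝ :=
  ((1 - z.1.2) * chi (z.1.1.1 n = v) + z.1.2 * chi (z.1.1.1 (n + 1) = v)) *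
    Real.exp (-|(n : ℝ)|)

/-- The tent feature family. -/
noncomputable def featT (n : ℤ) (v : G.V) (z : G.Susp (fun _ => (1 : ℝ))) : ℝ :=
  (min z.1.2 (1 - z.1.2) / 4) * chi (z.1.1.1 n = v) * Real.exp (-|(n : ℝ)|)


-- ===== pure real helper lemmas =====

lemma aff1_helper (t t' a b c : ℝ) (ht0 : 0 ≤ t) (ht1 : t < 1) (ht0' : 0 ≤ t') (ht1' : t' < 1)
    (ha0 : 0 ≤ a) (ha1 : a ≤ 1) (hb0 : 0 ≤ b) (hb1 : b ≤ 1) (hc0 : 0 ≤ c) (hc1 : c ≤ 1) :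
    |(1 - t) * a + t * b - ((1 - t') * b + t' * c)| ≤ 1 - t + t' := by
  have key1 : (t - 1 + t') * b ≤ t' := by
    rcases le_or_gt (t - 1 + t') 0 with h | h
    · nlinarith
    · nlinarith
  have key2 : t - 1 ≤ (t - 1 + t') * b := by
    rcases le_or_gt (t - 1 + t') 0 with h | h
    · nlinarith
    · nlinarith
  rw [abs_le]
  constructor
  · nlinarith [mul_nonneg ht0' hc0, mul_le_mul_of_nonneg_left ha1 (show (0:ℝ) ≤ 1 - t by linarith)]
  · nlinarith [mul_le_mul_of_nonneg_left hc1 ht0',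
      mul_nonneg (show (0:ℝ) ≤ 1 - t by linarith) ha0]

lemma aff2_helper (t t' a b c : ℝ) (ht0 : 0 ≤ t) (ht1 : t < 1) (ht0' : 0 ≤ t') (ht1' : t' < 1)
    (ha0 : 0 ≤ a) (ha1 : a ≤ 1) (hb0 : 0 ≤ b) (hb1 : b ≤ 1) (hc0 : 0 ≤ c) (hc1 : c ≤ 1) :
    |(1 - t) * a + t * b - ((1 - t') * c + t' * a)| ≤ 1 + t - t' := by
  have key1 : (1 - t - t') * a ≤ 1 - t' := by
    rcases le_or_gt (1 - t - t') 0 with h | h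
    · nlinarith
    · nlinarith
  have key2 : -t' ≤ (1 - t - t') * a := by
    rcases le_or_gt (1 - t - t') 0 with h | h
    · nlinarith
    · nlinarith
  rw [abs_le]
  constructor
  · nlinarith [mul_le_mul_of_nonneg_left hc1 (show (0:ℝ) ≤ 1 - t' by linarith),
      mul_nonneg (show (0:ℝ) ≤ 1 - t' by linarith) hc0,
      mul_nonneg hb0 ht0, mul_le_mul_of_nonneg_left hb1 ht0]
  · nlinarith [mul_nonneg (show (0:ℝ) ≤ 1 - t' by linarith) hc0,
      mul_le_mul_of_nonneg_left hc1 (show (0:ℝ) ≤ 1 - t' by linarith),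
      mul_nonneg ht0 hb0]

lemma abs_mul_exp_le (X : ℝ) (m : ℝ) : |X * Real.exp (-|m|)| ≤ |X| := by
  rw [abs_mul, abs_of_pos (Real.exp_pos _)]
  exact mul_le_of_le_one_right (abs_nonneg X)
    (Real.exp_le_one_iff.2 (neg_nonpos.2 (abs_nonneg _)))



-- horizontal bound for featA
lemma featA_horiz (n : ℤ) (v : G.V) (z w : G.Susp (fun _ => (1 : ℝ)))
    (h : IsHoriz G z w) :
    |featA G n v z - featA G n v w| ≤ horizLength G z w := by
  have hw2 : w.1.2 = z.1.2 := h.symm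
  have hE0 : (0:ℝ) < Real.exp (-|(n : ℝ)|) := Real.exp_pos _
  set E := Real.exp (-|(n : ℝ)|) with hE
  set t := z.1.2 with hts
  have ht0 : 0 ≤ t := susp_snd_nonneg G z
  have ht1 : t < 1 := susp_snd_lt_one G z
  set A := chi (z.1.1.1 n = v)
  set A' := chi (w.1.1.1 n = v)
  set B := chi (z.1.1.1 (n + 1) = v)
  set B' := chi (w.1.1.1 (n + 1) = v)
  have h1 : featA G n v z - featA G n v w
      = (1 - t) * ((A - A') * E) + t * ((B - B') * E) := by
    unfold featA
    rw [hw2]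
    ring
  have k1 : |(A - A') * E| ≤ dist0 G z.1.1 w.1.1 := by
    rw [abs_mul, abs_of_pos hE0]
    exact key_ind G z.1.1 w.1.1 n v
  have k2 : |(B - B') * E| ≤ dist0 G (G.shift z.1.1) (G.shift w.1.1) := by
    rw [abs_mul, abs_of_pos hE0]
    have := key_ind G (G.shift z.1.1) (G.shift w.1.1) n v
    rwa [shift_coord, shift_coord] at this
  rw [h1]
  unfold horizLength
  rw [← hts]
  have e1 : |(1 - t) * ((A - A') * E)| = (1 - t) * |(A - A') * E| := by
    rw [abs_mul, abs_of_nonneg (by linarith : (0:ℝ) ≤ 1 - t)]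
  have e2 : |t * ((B - B') * E)| = t * |(B - B') * E| := by
    rw [abs_mul, abs_of_nonneg ht0]
  calc |(1 - t) * ((A - A') * E) + t * ((B - B') * E)|
      ≤ |(1 - t) * ((A - A') * E)| + |t * ((B - B') * E)| := abs_add_le _ _
  _ = (1 - t) * |(A - A') * E| + t * |(B - B') * E| := by rw [e1, e2]
  _ ≤ (1 - t) * dist0 G z.1.1 w.1.1 + t * dist0 G (G.shift z.1.1) (G.shift w.1.1) :=
      add_le_add (mul_le_mul_of_nonneg_left k1 (by linarith))
        (mul_le_mul_of_nonneg_left k2 ht0)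

-- horizontal bound for featT
lemma featT_horiz (n : ℤ) (v : G.V) (z w : G.Susp (fun _ => (1 : ℝ)))
    (h : IsHoriz G z w) :
    |featT G n v z - featT G n v w| ≤ horizLength G z w := by
  have hw2 : w.1.2 = z.1.2 := h.symm
  have hE0 : (0:ℝ) < Real.exp (-|(n : ℝ)|) := Real.exp_pos _
  set E := Real.exp (-|(n : ℝ)|) with hE
  set t := z.1.2 with hts
  have ht0 : 0 ≤ t := susp_snd_nonneg G z
  have ht1 : t < 1 := susp_snd_lt_one G z
  set A := chi (z.1.1.1 n = v)
  set A' := chi (w.1.1.1 n = v)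
  have h1 : featT G n v z - featT G n v w = (min t (1 - t) / 4) * ((A - A') * E) := by
    unfold featT
    rw [hw2]
    ring
  have k1 : |(A - A') * E| ≤ dist0 G z.1.1 w.1.1 := by
    rw [abs_mul, abs_of_pos hE0]
    exact key_ind G z.1.1 w.1.1 n v
  have hm0 : 0 ≤ min t (1 - t) / 4 := by
    have : (0:ℝ) ≤ min t (1 - t) := le_min ht0 (by linarith)
    linarith
  have hm1 : min t (1 - t) / 4 ≤ 1 - t := by
    have : min t (1 - t) ≤ 1 - t := min_le_right _ _
    linarith
  rw [h1]
  unfold horizLength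
  rw [← hts]
  calc |(min t (1 - t) / 4) * ((A - A') * E)| = (min t (1 - t) / 4) * |(A - A') * E| := by rw [abs_mul, abs_of_nonneg hm0]
  _ ≤ (1 - t) * dist0 G z.1.1 w.1.1 := by
      apply mul_le_mul hm1 k1 (abs_nonneg _) (by linarith)
  _ ≤ (1 - t) * dist0 G z.1.1 w.1.1 + t * dist0 G (G.shift z.1.1) (G.shift w.1.1) := by
      have := dist0_nonneg G (G.shift z.1.1) (G.shift w.1.1)
      nlinarith


-- ===== vertical bounds: arithmetic cores =====

lemma featA_core (t t' : ℝ) (k : ℤ) (a b a' b' : ℝ)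
    (ht0 : 0 ≤ t) (ht1 : t < 1) (ht0' : 0 ≤ t') (ht1' : t' < 1)
    (ha0 : 0 ≤ a) (ha1 : a ≤ 1) (hb0 : 0 ≤ b) (hb1 : b ≤ 1)
    (ha0' : 0 ≤ a') (ha1' : a' ≤ 1) (hb0' : 0 ≤ b') (hb1' : b' ≤ 1)
    (h0 : k = 0 → a' = a ∧ b' = b) (h1 : k = 1 → a' = b) (hm1 : k = -1 → b' = a) :
    |(1 - t) * a + t * b - ((1 - t') * a' + t' * b')| ≤ |t' - t + (k : ℝ)| := by
  by_cases hk0 : k = 0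
  · obtain ⟨e1, e2⟩ := h0 hk0
    rw [e1, e2, hk0]
    push_cast
    rw [add_zero]
    have e3 : (1 - t) * a + t * b - ((1 - t') * a + t' * b) = (t' - t) * (a - b) := by
      ring
    rw [e3, abs_mul]
    have : |a - b| ≤ 1 := by rw [abs_le]; constructor <;> linarith
    nlinarith [abs_nonneg (t' - t)]
  · by_cases hk1 : k = 1
    · rw [h1 hk1, hk1]
      push_cast
      rw [show t' - t + (1:ℝ) = 1 - t + t' by ring,
        abs_of_pos (show (0:ℝ) < 1 - t + t' by linarith)]
      exact aff1_helper t t' a b b' ht0 ht1 ht0' ht1' ha0 ha1 hb0 hb1 hb0' hb1'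
    · by_cases hkm : k = -1
      · rw [hm1 hkm, hkm]
        push_cast
        rw [show t' - t + (-1 : ℝ) = -(1 + t - t') by ring, abs_neg,
          abs_of_pos (show (0:ℝ) < 1 + t - t' by linarith)]
        exact aff2_helper t t' a b a' ht0 ht1 ht0' ht1' ha0 ha1 hb0 hb1 ha0' ha1'
      · have hk2' : (2:ℝ) ≤ |(k:ℝ)| := by
          rcases (show k ≤ -2 ∨ 2 ≤ k by omega) with hcase | hcase
          · rw [abs_of_nonpos (show ((k:ℝ)) ≤ 0 by exact_mod_cast (show k ≤ 0 by omega))]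
            exact_mod_cast (show (2:ℤ) ≤ -k by omega)
          · rw [abs_of_nonneg
                (show (0:ℝ) ≤ (k:ℝ) by exact_mod_cast (show (0:ℤ) ≤ k by omega))]
            exact_mod_cast hcase
        have hPQ : |(1 - t) * a + t * b - ((1 - t') * a' + t' * b')| ≤ 1 := by
          rw [abs_le]
          constructor <;>
            nlinarith [mul_nonneg (show (0:ℝ) ≤ 1 - t by linarith) ha0,
              mul_nonneg ht0 hb0,
              mul_nonneg (show (0:ℝ) ≤ 1 - t' by linarith) ha0',
              mul_nonneg ht0' hb0',
              mul_le_mul_of_nonneg_left ha1 (show (0:ℝ) ≤ 1 - t by linarith),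
              mul_le_mul_of_nonneg_left hb1 ht0,
              mul_le_mul_of_nonneg_left ha1' (show (0:ℝ) ≤ 1 - t' by linarith),
              mul_le_mul_of_nonneg_left hb1' ht0']
        have hone : (1:ℝ) ≤ |t' - t + (k:ℝ)| := by
          rcases abs_cases (t' - t + (k:ℝ)) with ⟨e1, _⟩ | ⟨e1, _⟩ <;>
            rcases abs_cases ((k:ℝ)) with ⟨e3, _⟩ | ⟨e3, _⟩ <;> linarith
        linarith

lemma featT_core (t t' : ℝ) (k : ℤ) (a a' : ℝ)
    (ht0 : 0 ≤ t) (ht1 : t < 1) (ht0' : 0 ≤ t') (ht1' : t' < 1)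
    (ha0 : 0 ≤ a) (ha1 : a ≤ 1) (ha0' : 0 ≤ a') (ha1' : a' ≤ 1)
    (h0 : k = 0 → a' = a) :
    |min t (1 - t) / 4 * a - min t' (1 - t') / 4 * a'| ≤ |t' - t + (k : ℝ)| := by
  have hX0 : 0 ≤ min t (1 - t) / 4 * a := by
    have : (0:ℝ) ≤ min t (1 - t) := le_min ht0 (by linarith)
    nlinarith
  have hXt : min t (1 - t) / 4 * a ≤ t / 4 := by
    have h := min_le_left t (1 - t)
    nlinarith
  have hX1t : min t (1 - t) / 4 * a ≤ (1 - t) / 4 := by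
    have h := min_le_right t (1 - t)
    nlinarith
  have hY0 : 0 ≤ min t' (1 - t') / 4 * a' := by
    have : (0:ℝ) ≤ min t' (1 - t') := le_min ht0' (by linarith)
    nlinarith
  have hYt : min t' (1 - t') / 4 * a' ≤ t' / 4 := by
    have h := min_le_left t' (1 - t')
    nlinarith
  have hY1t : min t' (1 - t') / 4 * a' ≤ (1 - t') / 4 := by
    have h := min_le_right t' (1 - t')
    nlinarith
  rcases lt_trichotomy k 0 with hk | hk | hk
  · have hkR : (k:ℝ) ≤ -1 := by exact_mod_cast (by omega : k ≤ (-1 : ℤ))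
    rw [abs_of_neg (show t' - t + (k:ℝ) < 0 by linarith), abs_le]
    constructor <;> linarith
  · subst hk
    have e := h0 rfl
    subst e
    push_cast
    rw [add_zero]
    have e2 : min t (1 - t) / 4 * a' - min t' (1 - t') / 4 * a'
        = (min t (1 - t) - min t' (1 - t')) / 4 * a' := by ring
    rw [e2]
    have hmm : |min t (1 - t) - min t' (1 - t')| ≤ |t' - t| := by
      calc |min t (1 - t) - min t' (1 - t')| ≤ max (|t - t'|) (|1 - t - (1 - t')|) :=
        abs_min_sub_min_le_max _ _ _ _
      _ = |t' - t| := by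
          rw [show (1:ℝ) - t - (1 - t') = t' - t by ring, abs_sub_comm t t', max_self]
    calc |(min t (1 - t) - min t' (1 - t')) / 4 * a'|
        = |min t (1 - t) - min t' (1 - t')| / 4 * |a'| := by rw [abs_mul, abs_div]; norm_num
    _ ≤ |t' - t| / 4 * 1 := by
        apply mul_le_mul (by linarith) (by rw [abs_le]; constructor <;> linarith)
          (abs_nonneg _) (by positivity)
    _ ≤ |t' - t| := by nlinarith [abs_nonneg (t' - t)]
  · have hkR : (1:ℝ) ≤ (k:ℝ) := by exact_mod_cast (by omega : (1:ℤ) ≤ k)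
    rw [abs_of_pos (show (0:ℝ) < t' - t + (k:ℝ) by linarith), abs_le]
    constructor <;> linarith



lemma featA_vert (n : ℤ) (v : G.V) (z : G.Susp (fun _ => (1 : ℝ))) (u : ℝ) :
    |featA G n v z - featA G n v (unitFlow G u z)| ≤ |u| := by
  have ht0 : 0 ≤ z.1.2 := z.2.1
  have ht1 : z.1.2 < 1 := z.2.2
  have ht0' : 0 ≤ Int.fract (z.1.2 + u) := Int.fract_nonneg _
  have ht1' : Int.fract (z.1.2 + u) < 1 := Int.fract_lt_one _
  have hu : u = Int.fract (z.1.2 + u) - z.1.2 + ((⌊z.1.2 + u⌋ : ℤ) : ℝ) := by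
    rw [Int.fract]; ring
  have cA : (unitFlow G u z).1.1.1 n = z.1.1.1 (n + ⌊z.1.2 + u⌋) :=
    shift_zpow_coord G ⌊z.1.2 + u⌋ z.1.1 n
  have cB : (unitFlow G u z).1.1.1 (n + 1) = z.1.1.1 (n + 1 + ⌊z.1.2 + u⌋) :=
    shift_zpow_coord G ⌊z.1.2 + u⌋ z.1.1 (n + 1)
  have h1 : featA G n v (unitFlow G u z)
      = ((1 - Int.fract (z.1.2 + u)) * chi (z.1.1.1 (n + ⌊z.1.2 + u⌋) = v)
          + Int.fract (z.1.2 + u) * chi (z.1.1.1 (n + 1 + ⌊z.1.2 + u⌋) = v)) *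
        Real.exp (-|(n : ℝ)|) := by
    unfold featA
    rw [cA, cB]
    rfl
  have h0 : featA G n v z
      = ((1 - z.1.2) * chi (z.1.1.1 n = v) + z.1.2 * chi (z.1.1.1 (n + 1) = v)) *
        Real.exp (-|(n : ℝ)|) := rfl
  rw [h0, h1]
  have main := featA_core z.1.2 (Int.fract (z.1.2 + u)) ⌊z.1.2 + u⌋
    (chi (z.1.1.1 n = v)) (chi (z.1.1.1 (n + 1) = v))
    (chi (z.1.1.1 (n + ⌊z.1.2 + u⌋) = v)) (chi (z.1.1.1 (n + 1 + ⌊z.1.2 + u⌋) = v))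
    ht0 ht1 ht0' ht1' (chi_nonneg _) (chi_le_one _) (chi_nonneg _) (chi_le_one _)
    (chi_nonneg _) (chi_le_one _) (chi_nonneg _) (chi_le_one _)
    (fun hk => by rw [hk]; constructor <;> norm_num)
    (fun hk => by rw [hk])
    (fun hk => by rw [hk]; norm_num)
  calc |((1 - z.1.2) * chi (z.1.1.1 n = v) + z.1.2 * chi (z.1.1.1 (n + 1) = v)) *
          Real.exp (-|(n : ℝ)|)
        - ((1 - Int.fract (z.1.2 + u)) * chi (z.1.1.1 (n + ⌊z.1.2 + u⌋) = v)
          + Int.fract (z.1.2 + u) * chi (z.1.1.1 (n + 1 + ⌊z.1.2 + u⌋) = v)) *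
          Real.exp (-|(n : ℝ)|)|
      = |((1 - z.1.2) * chi (z.1.1.1 n = v) + z.1.2 * chi (z.1.1.1 (n + 1) = v)
        - ((1 - Int.fract (z.1.2 + u)) * chi (z.1.1.1 (n + ⌊z.1.2 + u⌋) = v)
          + Int.fract (z.1.2 + u) * chi (z.1.1.1 (n + 1 + ⌊z.1.2 + u⌋) = v))) *
          Real.exp (-|(n : ℝ)|)| := by ring_nf
  _ ≤ |(1 - z.1.2) * chi (z.1.1.1 n = v) + z.1.2 * chi (z.1.1.1 (n + 1) = v)
        - ((1 - Int.fract (z.1.2 + u)) * chi (z.1.1.1 (n + ⌊z.1.2 + u⌋) = v)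
          + Int.fract (z.1.2 + u) * chi (z.1.1.1 (n + 1 + ⌊z.1.2 + u⌋) = v))| :=
      abs_mul_exp_le _ _
  _ ≤ |Int.fract (z.1.2 + u) - z.1.2 + ((⌊z.1.2 + u⌋ : ℤ) : ℝ)| := main
  _ = |u| := by rw [← hu]

lemma featT_vert (n : ℤ) (v : G.V) (z : G.Susp (fun _ => (1 : ℝ))) (u : ℝ) :
    |featT G n v z - featT G n v (unitFlow G u z)| ≤ |u| := by
  have ht0 : 0 ≤ z.1.2 := z.2.1
  have ht1 : z.1.2 < 1 := z.2.2
  have ht0' : 0 ≤ Int.fract (z.1.2 + u) := Int.fract_nonneg _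
  have ht1' : Int.fract (z.1.2 + u) < 1 := Int.fract_lt_one _
  have hu : u = Int.fract (z.1.2 + u) - z.1.2 + ((⌊z.1.2 + u⌋ : ℤ) : ℝ) := by
    rw [Int.fract]; ring
  have cA : (unitFlow G u z).1.1.1 n = z.1.1.1 (n + ⌊z.1.2 + u⌋) :=
    shift_zpow_coord G ⌊z.1.2 + u⌋ z.1.1 n
  have h1 : featT G n v (unitFlow G u z)
      = (min (Int.fract (z.1.2 + u)) (1 - Int.fract (z.1.2 + u)) / 4)
          * chi (z.1.1.1 (n + ⌊z.1.2 + u⌋) = v) * Real.exp (-|(n : ℝ)|) := by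
    unfold featT
    rw [cA]
    rfl
  have h0 : featT G n v z
      = (min z.1.2 (1 - z.1.2) / 4) * chi (z.1.1.1 n = v) * Real.exp (-|(n : ℝ)|) := rfl
  rw [h0, h1]
  have main := featT_core z.1.2 (Int.fract (z.1.2 + u)) ⌊z.1.2 + u⌋
    (chi (z.1.1.1 n = v)) (chi (z.1.1.1 (n + ⌊z.1.2 + u⌋) = v))
    ht0 ht1 ht0' ht1' (chi_nonneg _) (chi_le_one _) (chi_nonneg _) (chi_le_one _)
    (fun hk => by rw [hk]; norm_num)
  calc |min z.1.2 (1 - z.1.2) / 4 * chi (z.1.1.1 n = v) * Real.exp (-|(n : ℝ)|)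
        - min (Int.fract (z.1.2 + u)) (1 - Int.fract (z.1.2 + u)) / 4
            * chi (z.1.1.1 (n + ⌊z.1.2 + u⌋) = v) * Real.exp (-|(n : ℝ)|)|
      = |(min z.1.2 (1 - z.1.2) / 4 * chi (z.1.1.1 n = v)
        - min (Int.fract (z.1.2 + u)) (1 - Int.fract (z.1.2 + u)) / 4
            * chi (z.1.1.1 (n + ⌊z.1.2 + u⌋) = v)) * Real.exp (-|(n : ℝ)|)| := by ring_nf
  _ ≤ |min z.1.2 (1 - z.1.2) / 4 * chi (z.1.1.1 n = v)
        - min (Int.fract (z.1.2 + u)) (1 - Int.fract (z.1.2 + u)) / 4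
            * chi (z.1.1.1 (n + ⌊z.1.2 + u⌋) = v)| := abs_mul_exp_le _ _
  _ ≤ |Int.fract (z.1.2 + u) - z.1.2 + ((⌊z.1.2 + u⌋ : ℤ) : ℝ)| := main
  _ = |u| := by rw [← hu]



lemma featA_le_d1 (n : ℤ) (v : G.V) (z w : G.Susp (fun _ => (1 : ℝ))) :
    |featA G n v z - featA G n v w| ≤ d1 G z w :=
  feat_le_d1 G (featA G n v) (fun a b h => featA_horiz G n v a b h)
    (fun a u => featA_vert G n v a u) z w

lemma featT_le_d1 (n : ℤ) (v : G.V) (z w : G.Susp (fun _ => (1 : ℝ))) :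
    |featT G n v z - featT G n v w| ≤ d1 G z w :=
  feat_le_d1 G (featT G n v) (fun a b h => featT_horiz G n v a b h)
    (fun a u => featT_vert G n v a u) z w

lemma d1_eq_zero_imp {z w : G.Susp (fun _ => (1 : ℝ))} (h : d1 G z w = 0) : z = w := by
  have hts : z.1.2 = w.1.2 := height_eq_of_d1_eq_zero G h
  have hE : Real.exp (-|(0:ℝ)|) ≠ 0 := (Real.exp_pos _).ne'
  have hseq : ∀ m : ℤ, z.1.1.1 m = w.1.1.1 m := by
    intro m
    have hEm : Real.exp (-|(m:ℝ)|) ≠ 0 := (Real.exp_pos _).ne'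
    by_cases h0 : z.1.2 = 0
    · -- use the affine feature
      have hw0 : w.1.2 = 0 := by rw [← hts, h0]
      have hb := featA_le_d1 G m (z.1.1.1 m) z w
      rw [h] at hb
      have heq : featA G m (z.1.1.1 m) z = featA G m (z.1.1.1 m) w :=
        sub_eq_zero.1 (abs_eq_zero.1 (le_antisymm hb (abs_nonneg _)))
      unfold featA at heq
      rw [h0, hw0] at heq
      have heq2 := mul_right_cancel₀ hEm heq
      simp only [sub_zero, one_mul, zero_mul, add_zero] at heq2
      have h2 : chi (w.1.1.1 m = z.1.1.1 m) = 1 := by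
        rw [← heq2]
        simp [chi]
      exact ((chi_eq_one_iff _).1 h2).symm
    · -- use the tent feature
      have htpos : 0 < z.1.2 := lt_of_le_of_ne (susp_snd_nonneg G z) (Ne.symm h0)
      have hphi : 0 < min z.1.2 (1 - z.1.2) / 4 := by
        have h1 : (0:ℝ) < min z.1.2 (1 - z.1.2) :=
          lt_min htpos (by linarith [susp_snd_lt_one G z])
        linarith
      have hb := featT_le_d1 G m (z.1.1.1 m) z w
      rw [h] at hb
      have heq : featT G m (z.1.1.1 m) z = featT G m (z.1.1.1 m) w :=
        sub_eq_zero.1 (abs_eq_zero.1 (le_antisymm hb (abs_nonneg _)))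
      unfold featT at heq
      rw [← hts] at heq
      have heq2 := mul_right_cancel₀ hEm heq
      have heq3 := mul_left_cancel₀ hphi.ne' heq2
      have h1 : chi (z.1.1.1 m = z.1.1.1 m) = 1 := (chi_eq_one_iff _).2 rfl
      have h2 : chi (w.1.1.1 m = z.1.1.1 m) = 1 := by rw [← heq3, h1]
      exact ((chi_eq_one_iff _).1 h2).symm
  have hx : z.1.1 = w.1.1 := Subtype.ext (funext hseq)
  apply Subtype.ext
  apply Prod.ext hx hts

lemma d1_eq_zero_iff (z w : G.Susp (fun _ => (1 : ℝ))) : d1 G z w = 0 ↔ z = w := by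
  constructor
  · exact d1_eq_zero_imp G
  · rintro rfl; exact d1_self G z

lemma thetaR_injective (r : G.Space → ℝ) (hr : ∀ x, 0 < r x) :
    Function.Injective (thetaR G r) := by
  intro p q h
  unfold thetaR at h
  have h1 : (p.1.1, p.1.2 / r p.1.1) = (q.1.1, q.1.2 / r q.1.1) := by
    have key : ∀ s : G.Susp r, (thetaR G r s).1 = (s.1.1, s.1.2 / r s.1.1) := fun s => by
      simp [thetaR, hr]
    have h0 : thetaR G r p = thetaR G r q := h
    rw [← key p, ← key q, h0]
  rw [Prod.mk.injEq] at h1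
  obtain ⟨e1, e2⟩ := h1
  rw [← e1] at e2
  have e3 : p.1.2 = q.1.2 := by
    have hne : r p.1.1 ≠ 0 := (hr p.1.1).ne'
    field_simp at e2
    exact e2
  apply Subtype.ext
  apply Prod.ext e1 e3

end MarkovGraph

/-- `d` is a metric on `X`. -/
def IsMetricOn {X : Type*} (d : X → X → ℝ) : Prop :=
  (∀ z w, 0 ≤ d z w) ∧ (∀ z w, d z w = 0 ↔ z = w) ∧ (∀ z w, d z w = d w z) ∧
    ∀ z w u, d z u ≤ d z w + d w u

open MarkovGraph in
/-- The Bowen–Walters function `d1` is a metric on the unit suspension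
space Σ_1, and consequently `d_r(z,w) := d1(ϑ_r z, ϑ_r w)` is a metric on Σ_r. -/
theorem statement0 (G : MarkovGraph) (r : G.Space → ℝ) (c C₀ : ℝ) (hc : 0 < c)
    (hr1 : ∀ x, c ≤ r x) (hr2 : ∀ x, r x ≤ C₀) (hHolder : HolderFun G r) :
    IsMetricOn (d1 G) ∧ IsMetricOn (dr G r) := by
  constructor
  · exact ⟨d1_nonneg G, d1_eq_zero_iff G, d1_comm G, d1_triangle G⟩
  · refine ⟨fun z w => d1_nonneg G _ _, fun z w => ?_, fun z w => d1_comm G _ _,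
      fun z w u => d1_triangle G _ _ _⟩
    constructor
    · intro h
      exact thetaR_injective G r (fun x => lt_of_lt_of_le hc (hr1 x)) (d1_eq_zero_imp G h)
    · rintro rfl
      exact d1_self G _
end

section
/- Let σ:Σ→Σ be a topological Markov shift and r:Σ→ℝ a bounded Hölder continuous function, and let P^s, P^u be the Bowen–Marcus cocycles. Then for τ∈{s,u} and all points x,y,z∈Σ that are not pre-periodic: (i) (shift identity) whenever P^τ(x,y) is defined, P^τ(σx,σy) − P^τ(x,y) = r(x) − r(y); (ii) (cocycle equation) whenever y,z ∈ W^{wτ}(x), one has P^τ(x,y) + P^τ(y,z) = P^τ(x,z); in particular P^τ(x,x) = 0 and P^τ(x,y) = −P^τ(y,x). -/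
open MeasureTheory Filter Set
open scoped Classical

namespace MarkovGraph

variable (G : MarkovGraph)

/-- x is pre-periodic if one of its one-sided tails is periodic. -/
def PrePeriodic (x : G.Space) : Prop :=
  (∃ m : ℤ, ∃ p : ℤ, 0 < p ∧ ∀ i, m ≤ i → x.1 (i + p) = x.1 i) ∨
  (∃ n : ℤ, ∃ p : ℤ, 0 < p ∧ ∀ i, i ≤ n → x.1 (i - p) = x.1 i)

/-- y ∈ W^{ws}(x): some forward tails of x and y agree. -/
def Wws (x y : G.Space) : Prop := ∃ m n : ℤ, ∀ k : ℕ, y.1 (m + k) = x.1 (n + k)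

/-- y ∈ W^{wu}(x): some backward tails of x and y agree. -/
def Wwu (x y : G.Space) : Prop := ∃ m n : ℤ, ∀ k : ℕ, y.1 (m - k) = x.1 (n - k)

end MarkovGraph

open MarkovGraph in
/-- `Ps` is the stable Bowen–Marcus cocycle of `r`. -/
def IsBMStable (G : MarkovGraph) (r : G.Space → ℝ) (Ps : G.Space → G.Space → ℝ) : Prop :=
  ∀ x y : G.Space, ∀ m n : ℤ, ¬ PrePeriodic G x →
    (∀ k : ℕ, y.1 (m + k) = x.1 (n + k)) →
    Filter.Tendsto (fun k : ℕ => birkhoff G r (m + k) y - birkhoff G r (n + k) x)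
      Filter.atTop (nhds (Ps x y))

open MarkovGraph in
/-- `Pu` is the unstable Bowen–Marcus cocycle of `r`. -/
def IsBMUnstable (G : MarkovGraph) (r : G.Space → ℝ) (Pu : G.Space → G.Space → ℝ) : Prop :=
  ∀ x y : G.Space, ∀ m n : ℤ, ¬ PrePeriodic G x →
    (∀ k : ℕ, y.1 (m - k) = x.1 (n - k)) →
    Filter.Tendsto (fun k : ℕ => birkhoff G r (m - k) y - birkhoff G r (n - k) x)
      Filter.atTop (nhds (Pu x y))

namespace MarkovGraph
variable (G : MarkovGraph)

private lemma key_pow' (x : G.Space) (j : ℤ) :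
    (G.shift ^ (j+1)) x = (G.shift ^ j) (G.shift x) := by
  rw [zpow_add_one, Equiv.Perm.mul_apply]

private lemma birkhoff_shift' (r : G.Space → ℝ) (n : ℤ) (x : G.Space) :
    birkhoff G r n (G.shift x) = birkhoff G r (n+1) x - r x := by
  have hzero : (G.shift ^ (0:ℤ)) x = x := by simp
  have hinv : (G.shift ^ (-1 : ℤ)) (G.shift x) = x := by
    rw [zpow_neg_one]; exact Equiv.symm_apply_apply _ _
  rcases lt_trichotomy n (-1) with hn | hn | hn
  · have h1 : ¬ (0:ℤ) ≤ n := by omega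
    have h2 : ¬ (0:ℤ) ≤ n+1 := by omega
    rw [birkhoff, birkhoff, if_neg h1, if_neg h2]
    have hj : (-n).toNat = (-(n+1)).toNat + 1 := by omega
    set j' := (-(n+1)).toNat with hj'
    rw [hj, Finset.sum_range_succ]
    have hlast : ((j' : ℤ) - ((j' + 1 : ℕ) : ℤ)) = -1 := by push_cast; ring
    have hterm : ∀ i ∈ Finset.range j',
        r ((G.shift ^ ((i : ℤ) - ((j' + 1 : ℕ) : ℤ))) (G.shift x))
          = r ((G.shift ^ ((i : ℤ) - (j' : ℤ))) x) := by
      intro i _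
      have h := key_pow' G x ((i : ℤ) - ((j' + 1 : ℕ) : ℤ))
      have e : ((i : ℤ) - ((j' + 1 : ℕ) : ℤ)) + 1 = (i : ℤ) - (j' : ℤ) := by push_cast; ring
      rw [e] at h
      rw [← h]
    rw [Finset.sum_congr rfl hterm, hlast, hinv]
    ring
  · subst hn
    rw [birkhoff, birkhoff, if_neg (by omega : ¬ (0:ℤ) ≤ -1), if_pos (by omega : (0:ℤ) ≤ -1 + 1)]
    have h1 : ((-(-1) : ℤ)).toNat = 1 := by omega
    rw [h1]
    have h0 : ((-1 : ℤ) + 1).toNat = 0 := by omega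
    rw [h0, Finset.sum_range_one, Finset.range_zero, Finset.sum_empty]
    have e : ((0 : ℕ) : ℤ) - ((1 : ℕ) : ℤ) = -1 := by norm_num
    rw [e, hinv]; ring
  · have h1 : (0:ℤ) ≤ n := by omega
    rw [birkhoff, birkhoff, if_pos h1, if_pos (by omega : (0:ℤ) ≤ n+1)]
    have hn1 : (n+1).toNat = n.toNat + 1 := by omega
    rw [hn1, Finset.sum_range_succ']
    have hterm : ∀ i ∈ Finset.range n.toNat,
        r ((G.shift ^ (((i + 1 : ℕ)) : ℤ)) x) = r ((G.shift ^ (i : ℤ)) (G.shift x)) := by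
      intro i _
      have h := key_pow' G x (i : ℤ)
      have e : ((i + 1 : ℕ) : ℤ) = (i : ℤ) + 1 := by push_cast; ring
      rw [e, h]
    rw [Finset.sum_congr rfl hterm]
    simp [hzero]

private lemma prePeriodic_of_shift {x : G.Space} (h : PrePeriodic G (G.shift x)) :
    PrePeriodic G x := by
  have hs : ∀ i : ℤ, (G.shift x).1 i = x.1 (i+1) := fun _ => rfl
  rcases h with ⟨m, p, hp, h⟩ | ⟨n, p, hp, h⟩
  · left
    refine ⟨m + 1, p, hp, fun i hi => ?_⟩
    have := h (i - 1) (by omega)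
    rw [hs, hs] at this
    rw [show i - 1 + p + 1 = i + p by ring, show i - 1 + 1 = i by ring] at this
    exact this
  · right
    refine ⟨n + 1, p, hp, fun i hi => ?_⟩
    have := h (i - 1) (by omega)
    rw [hs, hs] at this
    rw [show i - 1 - p + 1 = i - p by ring, show i - 1 + 1 = i by ring] at this
    exact this

private lemma tail_add {x y : G.Space} {m n : ℤ}
    (h : ∀ k : ℕ, y.1 (m + k) = x.1 (n + k)) (a : ℕ) :
    ∀ k : ℕ, y.1 ((m + a) + k) = x.1 ((n + a) + k) := by
  intro k
  have := h (a + k)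
  rw [show m + (a : ℤ) + k = m + ((a + k : ℕ) : ℤ) by push_cast; ring,
    show n + (a : ℤ) + k = n + ((a + k : ℕ) : ℤ) by push_cast; ring]
  exact this

private lemma tail_sub {x y : G.Space} {m n : ℤ}
    (h : ∀ k : ℕ, y.1 (m - k) = x.1 (n - k)) (a : ℕ) :
    ∀ k : ℕ, y.1 ((m - a) - k) = x.1 ((n - a) - k) := by
  intro k
  have := h (a + k)
  rw [show m - (a : ℤ) - k = m - ((a + k : ℕ) : ℤ) by push_cast; ring,
    show n - (a : ℤ) - k = n - ((a + k : ℕ) : ℤ) by push_cast; ring]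
  exact this

end MarkovGraph


open MarkovGraph in
/-- Shift identity and cocycle equation for the Bowen–Marcus
cocycles. -/
theorem statement5 (G : MarkovGraph) (r : G.Space → ℝ)
    (hbdd : ∃ M : ℝ, ∀ x, |r x| ≤ M) (hHolder : HolderFun G r)
    (Ps Pu : G.Space → G.Space → ℝ)
    (hPs : IsBMStable G r Ps) (hPu : IsBMUnstable G r Pu) :
    (∀ x y : G.Space, ¬ PrePeriodic G x → ¬ PrePeriodic G y → Wws G x y →
      Ps (G.shift x) (G.shift y) - Ps x y = r x - r y) ∧
    (∀ x y : G.Space, ¬ PrePeriodic G x → ¬ PrePeriodic G y → Wwu G x y →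
      Pu (G.shift x) (G.shift y) - Pu x y = r x - r y) ∧
    (∀ x y z : G.Space, ¬ PrePeriodic G x → ¬ PrePeriodic G y → ¬ PrePeriodic G z →
      Wws G x y → Wws G x z → Ps x y + Ps y z = Ps x z) ∧
    (∀ x y z : G.Space, ¬ PrePeriodic G x → ¬ PrePeriodic G y → ¬ PrePeriodic G z →
      Wwu G x y → Wwu G x z → Pu x y + Pu y z = Pu x z) ∧
    (∀ x : G.Space, ¬ PrePeriodic G x → Ps x x = 0 ∧ Pu x x = 0) ∧
    (∀ x y : G.Space, ¬ PrePeriodic G x → ¬ PrePeriodic G y →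
      (Wws G x y → Ps x y = -Ps y x) ∧ (Wwu G x y → Pu x y = -Pu y x)) := by
  constructor
  · -- stable shift identity
    intro x y hx hy hw
    obtain ⟨m, n, h⟩ := hw
    have hx' : ¬ PrePeriodic G (G.shift x) := fun hp => hx (prePeriodic_of_shift G hp)
    have hσ : ∀ k : ℕ, (G.shift y).1 ((m - 1) + k) = (G.shift x).1 ((n - 1) + k) := by
      intro k
      show y.1 (m - 1 + (k : ℤ) + 1) = x.1 (n - 1 + (k : ℤ) + 1)
      rw [show m - 1 + (k : ℤ) + 1 = m + k by ring, show n - 1 + (k : ℤ) + 1 = n + k by ring]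
      exact h k
    have T1 := hPs x y m n hx h
    have T2 := hPs (G.shift x) (G.shift y) (m - 1) (n - 1) hx' hσ
    have heq : ∀ k : ℕ,
        birkhoff G r (m - 1 + k) (G.shift y) - birkhoff G r (n - 1 + k) (G.shift x)
          = (birkhoff G r (m + k) y - birkhoff G r (n + k) x) + (r x - r y) := by
      intro k
      have hy2 := birkhoff_shift' G r (m - 1 + k) y
      have hx2 := birkhoff_shift' G r (n - 1 + k) x
      rw [show m - 1 + (k : ℤ) + 1 = m + k by ring] at hy2
      rw [show n - 1 + (k : ℤ) + 1 = n + k by ring] at hx2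
      rw [hy2, hx2]; ring
    have T2' := T2.congr heq
    have T1' := T1.add_const (r x - r y)
    have := tendsto_nhds_unique T1' T2'
    linarith
  constructor
  · -- unstable shift identity
    intro x y hx hy hw
    obtain ⟨m, n, h⟩ := hw
    have hx' : ¬ PrePeriodic G (G.shift x) := fun hp => hx (prePeriodic_of_shift G hp)
    have hσ : ∀ k : ℕ, (G.shift y).1 ((m - 1) - k) = (G.shift x).1 ((n - 1) - k) := by
      intro k
      show y.1 (m - 1 - (k : ℤ) + 1) = x.1 (n - 1 - (k : ℤ) + 1)
      rw [show m - 1 - (k : ℤ) + 1 = m - k by ring, show n - 1 - (k : ℤ) + 1 = n - k by ring]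
      exact h k
    have T1 := hPu x y m n hx h
    have T2 := hPu (G.shift x) (G.shift y) (m - 1) (n - 1) hx' hσ
    have heq : ∀ k : ℕ,
        birkhoff G r (m - 1 - k) (G.shift y) - birkhoff G r (n - 1 - k) (G.shift x)
          = (birkhoff G r (m - k) y - birkhoff G r (n - k) x) + (r x - r y) := by
      intro k
      have hy2 := birkhoff_shift' G r (m - 1 - k) y
      have hx2 := birkhoff_shift' G r (n - 1 - k) x
      rw [show m - 1 - (k : ℤ) + 1 = m - k by ring] at hy2
      rw [show n - 1 - (k : ℤ) + 1 = n - k by ring] at hx2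
      rw [hy2, hx2]; ring
    have T2' := T2.congr heq
    have T1' := T1.add_const (r x - r y)
    have := tendsto_nhds_unique T1' T2'
    linarith
  have hcocS : ∀ x y z : G.Space, ¬ PrePeriodic G x → ¬ PrePeriodic G y → ¬ PrePeriodic G z →
      Wws G x y → Wws G x z → Ps x y + Ps y z = Ps x z := by
    intro x y z hx hy hz hwy hwz
    obtain ⟨m₁, n₁, h₁⟩ := hwy
    obtain ⟨m₂, n₂, h₂⟩ := hwz
    have h₁' := tail_add G h₁ (n₂ - n₁).toNat
    have h₂' := tail_add G h₂ (n₁ - n₂).toNat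
    have hab : n₁ + ((n₂ - n₁).toNat : ℤ) = n₂ + ((n₁ - n₂).toNat : ℤ) := by omega
    rw [hab] at h₁'
    have h₃ : ∀ k : ℕ, z.1 ((m₂ + ((n₁ - n₂).toNat : ℤ)) + k)
        = y.1 ((m₁ + ((n₂ - n₁).toNat : ℤ)) + k) := fun k => (h₂' k).trans (h₁' k).symm
    have T1 := hPs x y (m₁ + ((n₂ - n₁).toNat : ℤ)) (n₂ + ((n₁ - n₂).toNat : ℤ)) hx h₁'
    have T2 := hPs y z (m₂ + ((n₁ - n₂).toNat : ℤ)) (m₁ + ((n₂ - n₁).toNat : ℤ)) hy h₃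
    have T3 := hPs x z (m₂ + ((n₁ - n₂).toNat : ℤ)) (n₂ + ((n₁ - n₂).toNat : ℤ)) hx h₂'
    have T12 : Filter.Tendsto (fun k : ℕ =>
        birkhoff G r (m₂ + ((n₁ - n₂).toNat : ℤ) + k) z
          - birkhoff G r (n₂ + ((n₁ - n₂).toNat : ℤ) + k) x)
        Filter.atTop (nhds (Ps x y + Ps y z)) := (T1.add T2).congr (fun k => by ring)
    exact tendsto_nhds_unique T12 T3
  have hcocU : ∀ x y z : G.Space, ¬ PrePeriodic G x → ¬ PrePeriodic G y → ¬ PrePeriodic G z →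
      Wwu G x y → Wwu G x z → Pu x y + Pu y z = Pu x z := by
    intro x y z hx hy hz hwy hwz
    obtain ⟨m₁, n₁, h₁⟩ := hwy
    obtain ⟨m₂, n₂, h₂⟩ := hwz
    have h₁' := tail_sub G h₁ (n₁ - n₂).toNat
    have h₂' := tail_sub G h₂ (n₂ - n₁).toNat
    have hab : n₁ - ((n₁ - n₂).toNat : ℤ) = n₂ - ((n₂ - n₁).toNat : ℤ) := by omega
    rw [hab] at h₁'
    have h₃ : ∀ k : ℕ, z.1 ((m₂ - ((n₂ - n₁).toNat : ℤ)) - k)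
        = y.1 ((m₁ - ((n₁ - n₂).toNat : ℤ)) - k) := fun k => (h₂' k).trans (h₁' k).symm
    have T1 := hPu x y (m₁ - ((n₁ - n₂).toNat : ℤ)) (n₂ - ((n₂ - n₁).toNat : ℤ)) hx h₁'
    have T2 := hPu y z (m₂ - ((n₂ - n₁).toNat : ℤ)) (m₁ - ((n₁ - n₂).toNat : ℤ)) hy h₃
    have T3 := hPu x z (m₂ - ((n₂ - n₁).toNat : ℤ)) (n₂ - ((n₂ - n₁).toNat : ℤ)) hx h₂'
    have T12 : Filter.Tendsto (fun k : ℕ =>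
        birkhoff G r (m₂ - ((n₂ - n₁).toNat : ℤ) - k) z
          - birkhoff G r (n₂ - ((n₂ - n₁).toNat : ℤ) - k) x)
        Filter.atTop (nhds (Pu x y + Pu y z)) := (T1.add T2).congr (fun k => by ring)
    exact tendsto_nhds_unique T12 T3
  have hdiagS : ∀ x : G.Space, ¬ PrePeriodic G x → Ps x x = 0 := by
    intro x hx
    have T : Filter.Tendsto (fun _ : ℕ => (0:ℝ)) Filter.atTop (nhds (Ps x x)) :=
      (hPs x x 0 0 hx (fun _ => rfl)).congr (fun k => by ring)
    exact tendsto_nhds_unique T tendsto_const_nhds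
  have hdiagU : ∀ x : G.Space, ¬ PrePeriodic G x → Pu x x = 0 := by
    intro x hx
    have T : Filter.Tendsto (fun _ : ℕ => (0:ℝ)) Filter.atTop (nhds (Pu x x)) :=
      (hPu x x 0 0 hx (fun _ => rfl)).congr (fun k => by ring)
    exact tendsto_nhds_unique T tendsto_const_nhds
  refine ⟨hcocS, hcocU, fun x hx => ⟨hdiagS x hx, hdiagU x hx⟩, ?_⟩
  intro x y hx hy
  constructor
  · intro hw
    obtain ⟨m, n, h⟩ := hw
    have hw' : Wws G y x := ⟨n, m, fun k => (h k).symm⟩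
    have hxx : Wws G x x := ⟨0, 0, fun _ => rfl⟩
    have := hcocS x y x hx hy hx ⟨m, n, h⟩ hxx
    rw [hdiagS x hx] at this
    linarith
  · intro hw
    obtain ⟨m, n, h⟩ := hw
    have hxx : Wwu G x x := ⟨0, 0, fun _ => rfl⟩
    have := hcocU x y x hx hy hx ⟨m, n, h⟩ hxx
    rw [hdiagU x hx] at this
    linarith
end

section
/- Let σ:Σ→Σ be a topologically transitive topological Markov shift whose underlying graph is not a single cycle, and let σ_s:Σ^s→Σ^s be the associated one-sided shift. Let g:Σ^s→(0,1] satisfy Σ_{σ_s(y)=x} g(y) = 1 for all x∈Σ^s, with log g bounded and uniformly Hölder continuous on cylinders of length two. Let ν be an ergodic σ-invariant Borel probability measure on Σ giving positive measure to every nonempty cylinder, whose one-sided version ν^s = ν∘π_s^{−1} satisfies ν^s([a_0,a_1,…,a_k]) = ∫_{[a_1,…,a_k]} g(a_0·y) dν^s(y) for every admissible word (a_0,…,a_k) (where a_0·y denotes the concatenation). Then: (i) for every x∈Σ there is a unique Borel probability measure ν(·|x_0^∞) on W^s_loc(x) = {z∈Σ : z_i = x_i for all i ≥ 0} satisfying ν(_{−n}[a_{−n},…,a_{−1}]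 ∩ W^s_loc(x) | x_0^∞) = ∏_{j=1}^{n} g(a_{−j}⋯a_{−1}x_0x_1⋯) for all n and all admissible words; (ii) for ν-a.e. x∈Σ, the measure ν(·|x_0^∞) is non-atomic. -/
open MeasureTheory Filter Set
open scoped Classical

instance (G : MarkovGraph) : MeasurableSpace G.V := ⊤

instance (G : MarkovGraph) : MeasurableSpace G.Space :=
  inferInstanceAs (MeasurableSpace {x : ℤ → G.V // ∀ i, G.E (x i) (x (i + 1))})

instance (G : MarkovGraph) (r : G.Space → ℝ) : MeasurableSpace (G.Susp r) :=
  inferInstanceAs (MeasurableSpace {p : G.Space × ℝ // 0 ≤ p.2 ∧ p.2 < r p.1})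

namespace MarkovGraph

variable (G : MarkovGraph)

/-- The one-sided path space Σ^s. -/
def OS : Type := {x : ℕ → G.V // ∀ i, G.E (x i) (x (i + 1))}

/-- The one-sided left shift σ_s. -/
def shiftOS (x : G.OS) : G.OS := ⟨fun i => x.1 (i + 1), fun i => x.2 (i + 1)⟩

/-- The projection π_s : Σ → Σ^s, x ↦ (x_0, x_1, …). -/
def projOS (x : G.Space) : G.OS :=
  ⟨fun i => x.1 i, fun i => by push_cast; exact x.2 (i : ℤ)⟩

/-- The one-sided tail (x_m, x_{m+1}, …) of a two-sided sequence. -/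
def tailOS (x : G.Space) (m : ℤ) : G.OS :=
  ⟨fun i => x.1 (m + i), fun i => by push_cast; rw [← add_assoc]; exact x.2 (m + (i : ℤ))⟩

/-- One-sided cylinder [x_0, …, x_k] around a point. -/
def cylOS (x : G.OS) (k : ℕ) : Set G.OS := {y : G.OS | ∀ i ≤ k, y.1 i = x.1 i}

/-- Two-sided cylinder _a[x_a, …, x_b] around a point. -/
def cylZ (x : G.Space) (a b : ℤ) : Set G.Space :=
  {y : G.Space | ∀ i : ℤ, a ≤ i → i ≤ b → y.1 i = x.1 i}

end MarkovGraph

instance (G : MarkovGraph) : MeasurableSpace G.OS :=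
  inferInstanceAs (MeasurableSpace {x : ℕ → G.V // ∀ i, G.E (x i) (x (i + 1))})

namespace MarkovGraph

variable (G : MarkovGraph)

/-- Concatenation `a·y` of a vertex with a one-sided sequence (junk value if not
admissible). -/
noncomputable def consOS (a : G.V) (y : G.OS) : G.OS :=
  if h : G.E a (y.1 0) then
    ⟨fun i => match i with
      | 0 => a
      | j + 1 => y.1 j,
     fun i => match i with
      | 0 => h
      | j + 1 => y.2 j⟩
  else y

/-- Topological transitivity: any two vertices are joined by a finite path. -/
def TopTransitive : Prop :=
  ∀ u v : G.V, ∃ (k : ℕ) (w : ℕ → G.V), w 0 = u ∧ w k = v ∧ ∀ i < k, G.E (w i) (w (i + 1))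

/-- The graph is a single cycle. -/
def IsCycleGraph : Prop :=
  ∃ (n : ℕ) (e : G.V ≃ Fin n), ∀ u v, G.E u v ↔ (e v : ℕ) = ((e u : ℕ) + 1) % n

/-- The local stable set W^s_loc(x) = {z : z_i = x_i for all i ≥ 0}. -/
def WsLoc (x : G.Space) : Set G.Space := {z : G.Space | ∀ i : ℤ, 0 ≤ i → z.1 i = x.1 i}

end MarkovGraph

open MarkovGraph in
/-- A vertex with at least two distinct incoming edges. -/
def MarkovGraph.Multi (G : MarkovGraph) (v : G.V) : Prop := ∃ b c, b ≠ c ∧ G.E b v ∧ G.E c v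

namespace Stmt8

open MarkovGraph

lemma arithA1 (n a : ℕ) (ha : a < n) : (n - (n - a) % n) % n = a := by
  rcases Nat.eq_zero_or_pos a with rfl | hpos
  · simp
  · have h1 : (n - a) % n = n - a := Nat.mod_eq_of_lt (by omega)
    rw [h1]
    have h2 : n - (n - a) = a := by omega
    rw [h2, Nat.mod_eq_of_lt ha]

lemma arithA2 (n a b : ℕ) (ha : a < n) (hb : b < n) :
    (n - b) % n = ((n - a) % n + 1) % n ↔ a = (b + 1) % n := by
  have hn : 0 < n := lt_of_le_of_lt (Nat.zero_le _) ha
  have key : ∀ x y : ℕ, x % n = y % n ↔ (x : ZMod n) = (y : ZMod n) := by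
    intro x y
    rw [ZMod.natCast_eq_natCast_iff]
    exact Iff.rfl
  constructor
  · intro h
    have h' : ((n - b : ℕ) : ZMod n) = (((n - a) % n + 1 : ℕ) : ZMod n) := by
      rw [← key]; simpa using h
    have ha' : ((a : ℕ) : ZMod n) = ((b + 1 : ℕ) : ZMod n) := by
      push_cast [Nat.cast_sub ha.le, Nat.cast_sub hb.le, ZMod.natCast_mod] at h' ⊢
      rw [ZMod.natCast_self] at h'
      linear_combination h'
    have : a % n = (b + 1) % n := by rw [key]; exact ha'
    rwa [Nat.mod_eq_of_lt ha] at this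
  · intro h
    have ha' : ((a : ℕ) : ZMod n) = ((b + 1 : ℕ) : ZMod n) := by
      rw [← key, Nat.mod_eq_of_lt ha]; exact h
    have : ((n - b : ℕ) : ZMod n) = (((n - a) % n + 1 : ℕ) : ZMod n) := by
      push_cast [Nat.cast_sub ha.le, Nat.cast_sub hb.le, ZMod.natCast_mod] at ha' ⊢
      rw [ZMod.natCast_self]
      linear_combination ha'
    have h2 : (n - b) % n = (((n - a) % n + 1) : ℕ) % n := by rw [key]; exact this
    simpa using h2

variable {G : MarkovGraph}

/-- If there is a backward chain all whose vertices have unique predecessors,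
then the graph is a single cycle. -/
lemma chain_cycle (hT : TopTransitive G) (v : ℕ → G.V)
    (hE : ∀ j, G.E (v (j + 1)) (v j))
    (hU : ∀ j b c, G.E b (v j) → G.E c (v j) → b = c) : IsCycleGraph G := by
  classical
  have prop : ∀ a b, v a = v b → ∀ r, v (a + r) = v (b + r) := by
    intro a b hab r
    induction r with
    | zero => simpa using hab
    | succ r ih =>
        have h1 : G.E (v (a + r + 1)) (v (a + r)) := hE _
        have h2 : G.E (v (b + r + 1)) (v (a + r)) := by rw [ih]; exact hE _
        have h3 := hU (a + r) _ _ h1 h2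
        exact h3
  have onchain : ∀ q : G.V, ∃ k, q = v k := by
    intro q
    obtain ⟨k, w, hw0, hwk, hEw⟩ := hT q (v 0)
    have key : ∀ t, t ≤ k → w (k - t) = v t := by
      intro t
      induction t with
      | zero => intro _; simpa using hwk
      | succ t ih =>
          intro ht
          have ht' : t ≤ k := Nat.le_of_succ_le ht
          have h1 : w (k - t) = v t := ih ht'
          have hlt : k - t - 1 < k := by omega
          have h2 : G.E (w (k - t - 1)) (w (k - t - 1 + 1)) := hEw _ hlt
          have he : k - t - 1 + 1 = k - t := by omega
          rw [he, h1] at h2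
          have h3 := hU t _ _ h2 (hE t)
          have he2 : k - (t + 1) = k - t - 1 := by omega
          rw [he2, h3]
    have hk := key k le_rfl
    simp only [Nat.sub_self] at hk
    rw [hw0] at hk
    exact ⟨k, hk⟩
  have hret : ∃ p, 0 < p ∧ v p = v 0 := by
    obtain ⟨k, w, hw0, hwk, hEw⟩ := hT (v 0) (v 1)
    have key : ∀ t, t ≤ k → w (k - t) = v (t + 1) := by
      intro t
      induction t with
      | zero => intro _; simpa using hwk
      | succ t ih =>
          intro ht
          have ht' : t ≤ k := Nat.le_of_succ_le ht
          have h1 : w (k - t) = v (t + 1) := ih ht'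
          have hlt : k - t - 1 < k := by omega
          have h2 : G.E (w (k - t - 1)) (w (k - t - 1 + 1)) := hEw _ hlt
          have he : k - t - 1 + 1 = k - t := by omega
          rw [he, h1] at h2
          have h3 := hU (t + 1) _ _ h2 (hE (t + 1))
          have he2 : k - (t + 1) = k - t - 1 := by omega
          rw [he2, h3]
    have hk := key k le_rfl
    simp only [Nat.sub_self] at hk
    rw [hw0] at hk
    exact ⟨k + 1, Nat.succ_pos _, hk.symm⟩
  let n := Nat.find hret
  have hspec : 0 < n ∧ v n = v 0 := Nat.find_spec hret
  obtain ⟨hnpos, hnper⟩ := hspec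
  have hmin : ∀ d, 0 < d → d < n → v d ≠ v 0 := by
    intro d hd hdn hne
    exact Nat.find_min hret hdn ⟨hd, hne⟩
  have per : ∀ j, v (j + n) = v j := by
    intro j
    have := prop n 0 hnper j
    simpa [Nat.add_comm] using this
  have permod : ∀ j, v j = v (j % n) := by
    intro j
    conv_lhs => rw [← Nat.mod_add_div j n]
    generalize j / n = c
    induction c with
    | zero => simp
    | succ c ih =>
        have he : j % n + n * (c + 1) = (j % n + n * c) + n := by ring
        rw [he, per]; exact ih
  have distinct : ∀ i j, i < j → j < n → v i ≠ v j := by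
    intro i j hij hjn hne
    have h1 : v (i + (n - i)) = v (j + (n - i)) := prop i j hne (n - i)
    have he1 : i + (n - i) = n := by omega
    have he2 : j + (n - i) = (j - i) + n := by omega
    rw [he1, he2, per, hnper] at h1
    exact hmin (j - i) (by omega) (by omega) h1.symm
  have exrep : ∀ q : G.V, ∃ m, m < n ∧ v m = q := by
    intro q
    obtain ⟨k, hk⟩ := onchain q
    exact ⟨k % n, Nat.mod_lt _ hnpos, by rw [← permod]; exact hk.symm⟩
  let d : G.V → ℕ := fun q => Nat.find (exrep q)
  have hd1 : ∀ q, d q < n ∧ v (d q) = q := fun q => Nat.find_spec (exrep q)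
  have hdv : ∀ m, m < n → d (v m) = m := by
    intro m hm
    have h1 : d (v m) ≤ m := Nat.find_le ⟨hm, rfl⟩
    have h2 := (hd1 (v m)).2
    by_contra hne
    exact distinct _ _ (lt_of_le_of_ne h1 hne) hm h2
  have echar : ∀ q r, G.E q r ↔ d q = (d r + 1) % n := by
    intro q r
    constructor
    · intro hqr
      have h2 : v (d r) = r := (hd1 r).2
      have h3 : G.E q (v (d r)) := by rw [h2]; exact hqr
      have h4 : q = v (d r + 1) := hU (d r) _ _ h3 (hE (d r))
      rw [h4, permod (d r + 1), hdv _ (Nat.mod_lt _ hnpos)]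
    · intro h
      have h4 : q = v ((d r + 1) % n) := by rw [← h]; exact ((hd1 q).2).symm
      have h5 : G.E (v (d r + 1)) (v (d r)) := hE (d r)
      rw [(hd1 r).2] at h5
      rw [h4, ← permod (d r + 1)]
      exact h5
  refine ⟨n, ⟨fun q => ⟨(n - d q) % n, Nat.mod_lt _ hnpos⟩,
      fun k => v ((n - k.1) % n), ?_, ?_⟩, ?_⟩
  · intro q
    simp only
    rw [arithA1 n (d q) (hd1 q).1]
    exact (hd1 q).2
  · intro k
    apply Fin.ext
    simp only
    rw [hdv _ (Nat.mod_lt _ hnpos)]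
    exact arithA1 n k.1 k.2
  · intro q r
    simp only [Equiv.coe_fn_mk]
    rw [echar q r]
    exact (arithA2 n (d q) (d r) (hd1 q).1 (hd1 r).1).symm

/-- Transitive non-cycle graphs have vertices with two incoming edges arbitrarily
far in the past of any two-sided path. -/
lemma exists_multi (hT : TopTransitive G) (hNC : ¬ IsCycleGraph G) (z : G.Space) (N : ℕ) :
    ∃ j, N ≤ j ∧ G.Multi (z.1 (-(j : ℤ))) := by
  by_contra hcon
  push_neg at hcon
  apply hNC
  refine chain_cycle hT (fun j => z.1 (-((N + j : ℕ) : ℤ))) ?_ ?_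
  · intro j
    have h := z.2 (-((N + j + 1 : ℕ) : ℤ))
    have he : (-((N + j + 1 : ℕ) : ℤ)) + 1 = -((N + j : ℕ) : ℤ) := by push_cast; ring
    rw [he] at h
    exact h
  · intro j b c hb hc
    by_contra hbc
    exact hcon (N + j) (Nat.le_add_right _ _) ⟨b, c, hbc, hb, hc⟩

end Stmt8
namespace Stmt8

open MarkovGraph

variable {G : MarkovGraph}

lemma consOS_spec {a : G.V} {u : G.OS} (h : G.E a (u.1 0)) :
    (G.consOS a u).1 0 = a ∧ ∀ j, (G.consOS a u).1 (j + 1) = u.1 j := by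
  have e : G.consOS a u = ⟨fun i => match i with
      | 0 => a
      | j + 1 => u.1 j,
     fun i => match i with
      | 0 => h
      | j + 1 => u.2 j⟩ := by
    unfold MarkovGraph.consOS
    exact dif_pos h
  rw [e]
  exact ⟨rfl, fun j => rfl⟩

lemma shiftOS_consOS {a : G.V} {u : G.OS} (h : G.E a (u.1 0)) :
    G.shiftOS (G.consOS a u) = u :=
  Subtype.ext (funext fun j => (consOS_spec h).2 j)

lemma shift_val_zero {y u : G.OS} (h : G.shiftOS y = u) : u.1 0 = y.1 1 := by
  have h1 := congrArg Subtype.val h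
  exact (congrFun h1 0).symm

lemma consOS_eq_self {u y : G.OS} (h : G.shiftOS y = u) : G.consOS (y.1 0) u = y := by
  have he : G.E (y.1 0) (u.1 0) := by rw [shift_val_zero h]; exact y.2 0
  apply Subtype.ext
  funext j
  cases j with
  | zero => exact (consOS_spec he).1
  | succ j =>
      rw [(consOS_spec he).2 j]
      have h1 := congrArg Subtype.val h
      exact (congrFun h1 j).symm

/-- An injective enumeration of the vertices. -/
noncomputable def eV (G : MarkovGraph) : G.V → ℕ :=
  (@Countable.exists_injective_nat G.V G.countableV).choose

lemma eV_inj (G : MarkovGraph) : Function.Injective (eV G) :=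
  (@Countable.exists_injective_nat G.V G.countableV).choose_spec

section gsec

variable (g : G.OS → ℝ)

lemma hasSum_wt (hg0 : ∀ y, 0 < g y)
    (hgsum : ∀ x : G.OS, ∑' y : {y : G.OS // G.shiftOS y = x}, g y.1 = 1) (u : G.OS) :
    HasSum (fun a : {a : G.V // G.E a (u.1 0)} => g (G.consOS a.1 u)) 1 := by
  let ψ : {a : G.V // G.E a (u.1 0)} ≃ {y : G.OS // G.shiftOS y = u} :=
    { toFun := fun a => ⟨G.consOS a.1 u, shiftOS_consOS a.2⟩
      invFun := fun y => ⟨y.1.1 0, by rw [shift_val_zero y.2]; exact y.1.2 0⟩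
      left_inv := fun a => Subtype.ext (consOS_spec a.2).1
      right_inv := fun y => Subtype.ext (consOS_eq_self y.2) }
  have hs : Summable (fun y : {y : G.OS // G.shiftOS y = u} => g y.1) := by
    by_contra hns
    have h0 := tsum_eq_zero_of_not_summable hns
    rw [hgsum u] at h0
    exact one_ne_zero h0
  have h1 : HasSum (fun y : {y : G.OS // G.shiftOS y = u} => g y.1) 1 := by
    have := hs.hasSum
    rwa [hgsum u] at this
  exact (ψ.hasSum_iff (f := fun y : {y : G.OS // G.shiftOS y = u} => g y.1) (a := 1)).2 h1

/-- The left endpoint of the interval allotted to the predecessor `a`. -/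
noncomputable def low (G : MarkovGraph) (g : G.OS → ℝ) (u : G.OS) (a : G.V) : ℝ :=
  ∑' b : {b : G.V // G.E b (u.1 0)}, if eV G b.1 < eV G a then g (G.consOS b.1 u) else 0

lemma hasSum_lowf (hg0 : ∀ y, 0 < g y)
    (hgsum : ∀ x : G.OS, ∑' y : {y : G.OS // G.shiftOS y = x}, g y.1 = 1)
    (u : G.OS) (a : G.V) :
    HasSum (fun b : {b : G.V // G.E b (u.1 0)} =>
      if eV G b.1 < eV G a then g (G.consOS b.1 u) else 0) (low G g u a) := by
  apply Summable.hasSum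
  apply (hasSum_wt g hg0 hgsum u).summable.of_nonneg_of_le
  · intro b
    split
    · exact (hg0 _).le
    · exact le_rfl
  · intro b
    split
    · exact le_rfl
    · exact (hg0 _).le

lemma hasSum_leqf (hg0 : ∀ y, 0 < g y)
    (hgsum : ∀ x : G.OS, ∑' y : {y : G.OS // G.shiftOS y = x}, g y.1 = 1)
    (u : G.OS) (a : {b : G.V // G.E b (u.1 0)}) :
    HasSum (fun b : {b : G.V // G.E b (u.1 0)} =>
      if eV G b.1 ≤ eV G a.1 then g (G.consOS b.1 u) else 0)
      (low G g u a.1 + g (G.consOS a.1 u)) := by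
  have hsingle : HasSum (fun b : {b : G.V // G.E b (u.1 0)} =>
      if b = a then g (G.consOS a.1 u) else 0) (g (G.consOS a.1 u)) :=
    hasSum_ite_eq a (g (G.consOS a.1 u))
  have hadd := (hasSum_lowf g hg0 hgsum u a.1).add hsingle
  have hfun : (fun b : {b : G.V // G.E b (u.1 0)} =>
      (if eV G b.1 < eV G a.1 then g (G.consOS b.1 u) else 0) +
        if b = a then g (G.consOS a.1 u) else 0) =
      (fun b : {b : G.V // G.E b (u.1 0)} =>
        if eV G b.1 ≤ eV G a.1 then g (G.consOS b.1 u) else 0) := by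
    funext b
    rcases eq_or_ne b a with rfl | hba
    · simp
    · have hne : eV G b.1 ≠ eV G a.1 := by
        intro he
        exact hba (Subtype.ext (eV_inj G he))
      by_cases hlt : eV G b.1 < eV G a.1
      · rw [if_pos hlt, if_neg hba, if_pos (le_of_lt hlt), add_zero]
      · rw [if_neg hlt, if_neg hba, if_neg (by omega), add_zero]
  rwa [hfun] at hadd

lemma low_nonneg (hg0 : ∀ y, 0 < g y)
    (hgsum : ∀ x : G.OS, ∑' y : {y : G.OS // G.shiftOS y = x}, g y.1 = 1)
    (u : G.OS) (a : G.V) : 0 ≤ low G g u a := by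
  apply (hasSum_lowf g hg0 hgsum u a).nonneg
  intro b
  split
  · exact (hg0 _).le
  · exact le_rfl

lemma low_add_le_one (hg0 : ∀ y, 0 < g y)
    (hgsum : ∀ x : G.OS, ∑' y : {y : G.OS // G.shiftOS y = x}, g y.1 = 1)
    (u : G.OS) (a : {b : G.V // G.E b (u.1 0)}) :
    low G g u a.1 + g (G.consOS a.1 u) ≤ 1 := by
  apply hasSum_le _ (hasSum_leqf g hg0 hgsum u a) (hasSum_wt g hg0 hgsum u)
  intro b
  split
  · exact le_rfl
  · exact (hg0 _).le

lemma low_sep (hg0 : ∀ y, 0 < g y)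
    (hgsum : ∀ x : G.OS, ∑' y : {y : G.OS // G.shiftOS y = x}, g y.1 = 1)
    (u : G.OS) (a a' : {b : G.V // G.E b (u.1 0)})
    (h : eV G a.1 < eV G a'.1) :
    low G g u a.1 + g (G.consOS a.1 u) ≤ low G g u a'.1 := by
  apply hasSum_le _ (hasSum_leqf g hg0 hgsum u a) (hasSum_lowf g hg0 hgsum u a'.1)
  intro b
  by_cases hle : eV G b.1 ≤ eV G a.1
  · rw [if_pos hle, if_pos (by omega)]
  · rw [if_neg hle]
    split
    · exact (hg0 _).le
    · exact le_rfl

/-- Uniqueness of the chosen predecessor. -/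
lemma pick_unique (hg0 : ∀ y, 0 < g y)
    (hgsum : ∀ x : G.OS, ∑' y : {y : G.OS // G.shiftOS y = x}, g y.1 = 1)
    (u : G.OS) (t : ℝ) (a a' : {b : G.V // G.E b (u.1 0)})
    (ha : low G g u a.1 ≤ t ∧ t < low G g u a.1 + g (G.consOS a.1 u))
    (ha' : low G g u a'.1 ≤ t ∧ t < low G g u a'.1 + g (G.consOS a'.1 u)) :
    a = a' := by
  by_contra hne
  have hne' : eV G a.1 ≠ eV G a'.1 := by
    intro he
    exact hne (Subtype.ext (eV_inj G he))
  rcases lt_or_gt_of_ne hne' with h | h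
  · have := low_sep g hg0 hgsum u a a' h
    linarith [ha.2, ha'.1]
  · have := low_sep g hg0 hgsum u a' a h
    linarith [ha'.2, ha.1]

/-- Existence of the chosen predecessor. -/
lemma pick_exists (hg0 : ∀ y, 0 < g y)
    (hgsum : ∀ x : G.OS, ∑' y : {y : G.OS // G.shiftOS y = x}, g y.1 = 1)
    (u : G.OS) (t : ℝ) (h0 : 0 ≤ t) (h1 : t < 1) :
    ∃ a : {b : G.V // G.E b (u.1 0)},
      low G g u a.1 ≤ t ∧ t < low G g u a.1 + g (G.consOS a.1 u) := by
  classical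
  have hexceed : ∀ (f : {b : G.V // G.E b (u.1 0)} → ℝ) (c : ℝ), (∀ b, 0 ≤ f b) →
      (∀ b, f b ≠ 0 → f b = g (G.consOS b.1 u)) →
      HasSum f c → t < c →
      ∃ a : {b : G.V // G.E b (u.1 0)}, f a ≠ 0 ∧ t < low G g u a.1 + g (G.consOS a.1 u) := by
    intro f c hf0 hfg hfs htc
    have hlub := isLUB_hasSum hf0 hfs
    have hnub : ¬ (∀ s : Finset {b : G.V // G.E b (u.1 0)}, ∑ b ∈ s, f b ≤ t) := by
      intro hub
      have : c ≤ t := hlub.2 (by rintro r ⟨s, rfl⟩; exact hub s)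
      linarith
    push_neg at hnub
    obtain ⟨s, hs⟩ := hnub
    set s' := s.filter (fun b => f b ≠ 0) with hs'def
    have hsum_eq : ∑ b ∈ s', f b = ∑ b ∈ s, f b :=
      Finset.sum_filter_of_ne (fun b _ hb => hb)
    have hs' : t < ∑ b ∈ s', f b := by rw [hsum_eq]; exact hs
    have hne : s'.Nonempty := by
      by_contra hemp
      rw [Finset.not_nonempty_iff_eq_empty] at hemp
      rw [hemp, Finset.sum_empty] at hs'
      linarith
    obtain ⟨a, ha, hamax⟩ := s'.exists_max_image (fun b => eV G b.1) hne
    have haf : f a ≠ 0 := (Finset.mem_filter.1 ha).2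
    refine ⟨a, haf, ?_⟩
    have hmain := sum_le_hasSum s'
      (fun b _ => by split; exacts [(hg0 _).le, le_rfl])
      (hasSum_leqf g hg0 hgsum u a)
    have heq2 : ∑ b ∈ s', f b = ∑ b ∈ s',
        (if eV G b.1 ≤ eV G a.1 then g (G.consOS b.1 u) else 0) := by
      apply Finset.sum_congr rfl
      intro b hb
      rw [if_pos (hamax b hb), hfg b (Finset.mem_filter.1 hb).2]
    calc t < ∑ b ∈ s', f b := hs'
      _ ≤ low G g u a.1 + g (G.consOS a.1 u) := by rw [heq2]; exact hmain
  obtain ⟨a0, _, ha0⟩ := hexceed _ 1 (fun b => (hg0 _).le) (fun b _ => rfl)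
    (hasSum_wt g hg0 hgsum u) h1
  have hK : ∃ m : ℕ, ∃ a : {b : G.V // G.E b (u.1 0)},
      eV G a.1 = m ∧ t < low G g u a.1 + g (G.consOS a.1 u) := ⟨_, a0, rfl, ha0⟩
  obtain ⟨a, haeq, ha⟩ := Nat.find_spec hK
  refine ⟨a, ?_, ha⟩
  by_contra hlow
  push_neg at hlow
  have hf0' : ∀ b : {b : G.V // G.E b (u.1 0)},
      0 ≤ if eV G b.1 < eV G a.1 then g (G.consOS b.1 u) else 0 := by
    intro b; split; exacts [(hg0 _).le, le_rfl]
  have hfg' : ∀ b : {b : G.V // G.E b (u.1 0)},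
      (if eV G b.1 < eV G a.1 then g (G.consOS b.1 u) else 0) ≠ 0 →
      (if eV G b.1 < eV G a.1 then g (G.consOS b.1 u) else 0) = g (G.consOS b.1 u) := by
    intro b hb
    by_cases hlt : eV G b.1 < eV G a.1
    · rw [if_pos hlt]
    · rw [if_neg hlt] at hb; exact absurd rfl hb
  obtain ⟨a', ha'0, ha'⟩ := hexceed _ (low G g u a.1) hf0' hfg'
    (hasSum_lowf g hg0 hgsum u a.1) hlow
  have hlt : eV G a'.1 < eV G a.1 := by
    by_contra hge
    rw [if_neg hge] at ha'0
    exact ha'0 rfl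
  exact Nat.find_min hK (haeq ▸ hlt) ⟨a', rfl, ha'⟩

end gsec

end Stmt8
namespace Stmt8

open MarkovGraph

variable {G : MarkovGraph}

/-- The chosen predecessor of `u` at position `t`. -/
noncomputable def pickA (G : MarkovGraph) (g : G.OS → ℝ) (u : G.OS) (t : ℝ) :
    {b : G.V // G.E b (u.1 0)} :=
  if h : (∀ y, 0 < g y) ∧ (∀ x : G.OS, ∑' y : {y : G.OS // G.shiftOS y = x}, g y.1 = 1)
      ∧ 0 ≤ t ∧ t < 1 then
    (pick_exists g h.1 h.2.1 u t h.2.2.1 h.2.2.2).choose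
  else ⟨(G.in_edge (u.1 0)).choose, (G.in_edge (u.1 0)).choose_spec⟩

lemma pickA_spec {g : G.OS → ℝ} (hg0 : ∀ y, 0 < g y)
    (hgsum : ∀ x : G.OS, ∑' y : {y : G.OS // G.shiftOS y = x}, g y.1 = 1)
    (u : G.OS) (t : ℝ) (h0 : 0 ≤ t) (h1 : t < 1) :
    low G g u (pickA G g u t).1 ≤ t ∧
      t < low G g u (pickA G g u t).1 + g (G.consOS (pickA G g u t).1 u) := by
  unfold pickA
  rw [dif_pos ⟨hg0, hgsum, h0, h1⟩]
  exact (pick_exists g hg0 hgsum u t h0 h1).choose_spec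

/-- One step of the backward coding map. -/
noncomputable def stepUT (G : MarkovGraph) (g : G.OS → ℝ) (p : G.OS × ℝ) : G.OS × ℝ :=
  (G.consOS (pickA G g p.1 p.2).1 p.1,
    (p.2 - low G g p.1 (pickA G g p.1 p.2).1) / g (G.consOS (pickA G g p.1 p.2).1 p.1))

lemma stepUT_eq (g : G.OS → ℝ) (u : G.OS) (t : ℝ) {w0 : G.V}
    (hp : (pickA G g u t).1 = w0) :
    stepUT G g (u, t) = (G.consOS w0 u, (t - low G g u w0) / g (G.consOS w0 u)) := by
  unfold stepUT
  dsimp only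
  rw [hp]

/-- The orbit of the backward coding map. -/
noncomputable def orb (G : MarkovGraph) (g : G.OS → ℝ) (u : G.OS) (t : ℝ) (n : ℕ) : G.OS × ℝ :=
  (stepUT G g)^[n] (u, t)

/-- The symbolic past of `t`. -/
noncomputable def pastF (G : MarkovGraph) (g : G.OS → ℝ) (u : G.OS) (t : ℝ) (n : ℕ) : G.V :=
  (pickA G g (orb G g u t n).1 (orb G g u t n).2).1

lemma orb_succ (g : G.OS → ℝ) (u : G.OS) (t : ℝ) (n : ℕ) :
    orb G g u t (n + 1) = orb G g (stepUT G g (u, t)).1 (stepUT G g (u, t)).2 n := by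
  unfold orb
  rw [Function.iterate_succ_apply]

lemma orb_succ' (g : G.OS → ℝ) (u : G.OS) (t : ℝ) (n : ℕ) :
    orb G g u t (n + 1) = stepUT G g (orb G g u t n) := by
  unfold orb
  rw [Function.iterate_succ_apply']

lemma pastF_succ (g : G.OS → ℝ) (u : G.OS) (t : ℝ) (n : ℕ) :
    pastF G g u t (n + 1) = pastF G g (stepUT G g (u, t)).1 (stepUT G g (u, t)).2 n := by
  unfold pastF
  rw [orb_succ]

/-- The forward words built from `u` by prepending the letters of `w`. -/
noncomputable def ufut (G : MarkovGraph) (u : G.OS) (w : ℕ → G.V) : ℕ → G.OS :=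
  fun n => Nat.rec u (fun j prev => G.consOS (w j) prev) n

lemma ufut_succ (u : G.OS) (w : ℕ → G.V) (j : ℕ) :
    ufut G u w (j + 1) = G.consOS (w j) (ufut G u w j) := rfl

lemma ufut_shift (u : G.OS) (w : ℕ → G.V) (j : ℕ) :
    ufut G (G.consOS (w 0) u) (fun i => w (i + 1)) j = ufut G u w (j + 1) := by
  induction j with
  | zero => rfl
  | succ j ih => rw [ufut_succ, ufut_succ, ih]

/-- The weight of the word `w` of length `n` prepended to `u`. -/
noncomputable def Pw (G : MarkovGraph) (g : G.OS → ℝ) (u : G.OS) (w : ℕ → G.V) (n : ℕ) : ℝ :=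
  ∏ j ∈ Finset.range n, g (G.consOS (w j) (ufut G u w j))

lemma Pw_pos {g : G.OS → ℝ} (hg0 : ∀ y, 0 < g y) (u : G.OS) (w : ℕ → G.V) (n : ℕ) :
    0 < Pw G g u w n :=
  Finset.prod_pos fun _ _ => hg0 _

lemma Pw_succ (g : G.OS → ℝ) (u : G.OS) (w : ℕ → G.V) (n : ℕ) :
    Pw G g u w (n + 1) =
      Pw G g (G.consOS (w 0) u) (fun i => w (i + 1)) n * g (G.consOS (w 0) u) := by
  unfold Pw
  rw [Finset.prod_range_succ']
  congr 1
  apply Finset.prod_congr rfl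
  intro j _
  rw [ufut_shift]

lemma ufut_orb (g : G.OS → ℝ) (u : G.OS) (t : ℝ) (j : ℕ) :
    ufut G u (pastF G g u t) j = (orb G g u t j).1 := by
  induction j with
  | zero => rfl
  | succ j ih =>
      rw [ufut_succ, ih, orb_succ']
      rfl

lemma pastF_adm (g : G.OS → ℝ) (u : G.OS) (t : ℝ) (j : ℕ) :
    G.E (pastF G g u t j) ((ufut G u (pastF G g u t) j).1 0) := by
  rw [ufut_orb]
  exact (pickA G g (orb G g u t j).1 (orb G g u t j).2).2

lemma pastF_chain (g : G.OS → ℝ) (u : G.OS) (t : ℝ) (j : ℕ) :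
    G.E (pastF G g u t (j + 1)) (pastF G g u t j) := by
  have h := pastF_adm g u t (j + 1)
  have h2 : (ufut G u (pastF G g u t) (j + 1)).1 0 = pastF G g u t j := by
    rw [ufut_succ]
    exact (consOS_spec (pastF_adm g u t j)).1
  rwa [h2] at h

/-- The fundamental interval structure of the coding map. -/
lemma interval_main {g : G.OS → ℝ} (hg0 : ∀ y, 0 < g y)
    (hgsum : ∀ x : G.OS, ∑' y : {y : G.OS // G.shiftOS y = x}, g y.1 = 1) :
    ∀ (n : ℕ) (u : G.OS) (w : ℕ → G.V),
    (∀ j < n, G.E (w j) ((ufut G u w j).1 0)) →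
    ∃ A : ℝ, 0 ≤ A ∧ A + Pw G g u w n ≤ 1 ∧
      {t : ℝ | (0 ≤ t ∧ t < 1) ∧ ∀ j < n, pastF G g u t j = w j} =
        Set.Ico A (A + Pw G g u w n) := by
  intro n
  induction n with
  | zero =>
      intro u w _
      refine ⟨0, le_rfl, ?_, ?_⟩
      · have : Pw G g u w 0 = 1 := by simp [Pw]
        rw [this]; norm_num
      · have h1 : Pw G g u w 0 = 1 := by simp [Pw]
        rw [h1]
        ext t
        simp [Set.mem_Ico]
  | succ n ih =>
      intro u w hadm
      have h0 : G.E (w 0) (u.1 0) := hadm 0 (Nat.succ_pos n)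
      set δ := g (G.consOS (w 0) u) with hδdef
      have hδ : 0 < δ := hg0 _
      set s₀ := low G g u (w 0) with hs₀def
      have hs₀ : 0 ≤ s₀ := low_nonneg g hg0 hgsum u (w 0)
      have hs₁ : s₀ + δ ≤ 1 := low_add_le_one g hg0 hgsum u ⟨w 0, h0⟩
      obtain ⟨A', hA'0, hA'1, hset⟩ := ih (G.consOS (w 0) u) (fun i => w (i + 1))
        (by
          intro j hj
          rw [ufut_shift]
          exact hadm (j + 1) (by omega))
      set P' := Pw G g (G.consOS (w 0) u) (fun i => w (i + 1)) n with hP'def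
      have hP'pos : 0 < P' := Pw_pos hg0 _ _ _
      have hPsucc : Pw G g u w (n + 1) = P' * δ := Pw_succ g u w n
      refine ⟨s₀ + δ * A', by nlinarith, ?_, ?_⟩
      · rw [hPsucc]
        nlinarith
      · rw [hPsucc]
        ext t
        simp only [Set.mem_Ico, Set.mem_setOf_eq]
        constructor
        · rintro ⟨⟨ht0, ht1⟩, hpast⟩
          have hp0 : (pickA G g u t).1 = w 0 := hpast 0 (Nat.succ_pos n)
          have hspec := pickA_spec hg0 hgsum u t ht0 ht1
          rw [hp0] at hspec
          set t' := (t - s₀) / δ with ht'def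
          have hstep : stepUT G g (u, t) =
              (G.consOS (w 0) u, t') := stepUT_eq g u t hp0
          have hmem : t' ∈ Set.Ico A' (A' + P') := by
            rw [← hset]
            refine ⟨⟨by apply div_nonneg (by linarith [hspec.1]) hδ.le, ?_⟩, ?_⟩
            · rw [div_lt_one hδ]; linarith [hspec.2]
            · intro j hj
              have := hpast (j + 1) (by omega)
              rw [pastF_succ, hstep] at this
              exact this
          obtain ⟨hm1, hm2⟩ := hmem
          rw [ht'def, le_div_iff₀ hδ] at hm1
          rw [ht'def, div_lt_iff₀ hδ] at hm2
          constructor <;> nlinarith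
        · rintro ⟨hA, hB⟩
          have ht0 : 0 ≤ t := by nlinarith
          have hlt2 : t < s₀ + δ := by nlinarith
          have ht1 : t < 1 := by linarith
          have hspec := pickA_spec hg0 hgsum u t ht0 ht1
          have hp0 : (pickA G g u t) = ⟨w 0, h0⟩ :=
            pick_unique g hg0 hgsum u t _ _ hspec ⟨by nlinarith, hlt2⟩
          have hp0' : (pickA G g u t).1 = w 0 := by rw [hp0]
          set t' := (t - s₀) / δ with ht'def
          have hstep : stepUT G g (u, t) =
              (G.consOS (w 0) u, t') := stepUT_eq g u t hp0'
          have hmem : t' ∈ {s : ℝ | (0 ≤ s ∧ s < 1) ∧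
              ∀ j < n, pastF G g (G.consOS (w 0) u) s j = w (j + 1)} := by
            rw [hset]
            constructor
            · rw [ht'def, le_div_iff₀ hδ]; nlinarith
            · rw [ht'def, div_lt_iff₀ hδ]; nlinarith
          obtain ⟨⟨_, _⟩, hpast'⟩ := hmem
          refine ⟨⟨ht0, ht1⟩, ?_⟩
          intro j hj
          cases j with
          | zero => exact hp0'
          | succ j =>
              rw [pastF_succ, hstep]
              exact hpast' j (by omega)

end Stmt8
namespace Stmt8

open MarkovGraph MeasureTheory

variable {G : MarkovGraph}

lemma ufut_congr (u : G.OS) (w w' : ℕ → G.V) (j : ℕ) (h : ∀ i < j, w i = w' i) :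
    ufut G u w j = ufut G u w' j := by
  induction j with
  | zero => rfl
  | succ j ih =>
      rw [ufut_succ, ufut_succ, ih (fun i hi => h i (by omega)), h j (by omega)]

lemma cylset_meas {g : G.OS → ℝ} (hg0 : ∀ y, 0 < g y)
    (hgsum : ∀ x : G.OS, ∑' y : {y : G.OS // G.shiftOS y = x}, g y.1 = 1)
    (u : G.OS) (m : ℕ) (w : ℕ → G.V) :
    MeasurableSet {t : ℝ | (0 ≤ t ∧ t < 1) ∧ ∀ j < m, pastF G g u t j = w j} := by
  by_cases hadm : ∀ j < m, G.E (w j) ((ufut G u w j).1 0)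
  · obtain ⟨A, _, _, hset⟩ := interval_main hg0 hgsum m u w hadm
    rw [hset]
    exact measurableSet_Ico
  · have hempty : {t : ℝ | (0 ≤ t ∧ t < 1) ∧ ∀ j < m, pastF G g u t j = w j} = ∅ := by
      rw [Set.eq_empty_iff_forall_notMem]
      rintro t ⟨_, hp⟩
      apply hadm
      intro j hj
      have h1 : w j = pastF G g u t j := (hp j hj).symm
      have h2 : ufut G u w j = ufut G u (pastF G g u t) j :=
        ufut_congr u _ _ j (fun i hi => (hp i (by omega)).symm)
      rw [h1, h2]
      exact pastF_adm g u t j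
    rw [hempty]
    exact MeasurableSet.empty

lemma pastF_coord_meas {g : G.OS → ℝ} (hg0 : ∀ y, 0 < g y)
    (hgsum : ∀ x : G.OS, ∑' y : {y : G.OS // G.shiftOS y = x}, g y.1 = 1)
    (u : G.OS) (m : ℕ) (v : G.V) :
    MeasurableSet {t : ℝ | (0 ≤ t ∧ t < 1) ∧ pastF G g u t m = v} := by
  haveI : Countable G.V := G.countableV
  have hset : {t : ℝ | (0 ≤ t ∧ t < 1) ∧ pastF G g u t m = v} =
      ⋃ (w : Fin (m + 1) → G.V) (_ : w ⟨m, Nat.lt_succ_self m⟩ = v),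
        {t : ℝ | (0 ≤ t ∧ t < 1) ∧ ∀ j < m + 1,
          pastF G g u t j = (fun j : ℕ => if h : j < m + 1 then w ⟨j, h⟩ else v) j} := by
    ext t
    simp only [Set.mem_iUnion, Set.mem_setOf_eq]
    constructor
    · rintro ⟨ht, hv⟩
      refine ⟨fun i => pastF G g u t i.1, hv, ht, ?_⟩
      intro j hj
      rw [dif_pos hj]
    · rintro ⟨w, hw, ht, hp⟩
      refine ⟨ht, ?_⟩
      have := hp m (Nat.lt_succ_self m)
      rwa [dif_pos (Nat.lt_succ_self m), hw] at this
  rw [hset]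
  exact MeasurableSet.iUnion fun w => MeasurableSet.iUnion fun _ =>
    cylset_meas hg0 hgsum u (m + 1) _

/-- The values of the coding point map. -/
noncomputable def zval (G : MarkovGraph) (g : G.OS → ℝ) (x : G.Space) (t : ℝ) : ℤ → G.V :=
  fun i =>
    if 0 ≤ t ∧ t < 1 then
      (if 0 ≤ i then x.1 i else pastF G g (G.projOS x) t (-(i + 1)).toNat)
    else x.1 i

lemma zval_edge (g : G.OS → ℝ) (x : G.Space) (t : ℝ) (i : ℤ) :
    G.E (zval G g x t i) (zval G g x t (i + 1)) := by
  unfold zval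
  by_cases ht : 0 ≤ t ∧ t < 1
  · rw [if_pos ht, if_pos ht]
    rcases lt_trichotomy i (-1) with hi | hi | hi
    · rw [if_neg (by omega), if_neg (by omega)]
      have he : (-(i + 1)).toNat = (-(i + 1 + 1)).toNat + 1 := by omega
      rw [he]
      exact pastF_chain g (G.projOS x) t _
    · subst hi
      rw [if_neg (by omega), if_pos (by omega)]
      have h1 : (-((-1 : ℤ) + 1)).toNat = 0 := by norm_num
      rw [h1]
      have h5 : (G.projOS x).1 0 = x.1 ((-1 : ℤ) + 1) := congrArg x.1 (by omega)
      have h6 : G.E (pastF G g (G.projOS x) t 0) ((G.projOS x).1 0) :=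
        (pickA G g (G.projOS x) t).2
      rw [h5] at h6
      exact h6
    · rw [if_pos (by omega), if_pos (by omega)]
      exact x.2 i
  · rw [if_neg ht, if_neg ht]
    exact x.2 i

/-- The coding point map `[0,1) → Σ` for the conditional measure at `x`. -/
noncomputable def Zfun (G : MarkovGraph) (g : G.OS → ℝ) (x : G.Space) (t : ℝ) : G.Space :=
  ⟨zval G g x t, zval_edge g x t⟩

lemma Zfun_mem_WsLoc (g : G.OS → ℝ) (x : G.Space) (t : ℝ) : Zfun G g x t ∈ WsLoc G x := by
  intro i hi
  show zval G g x t i = x.1 i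
  unfold zval
  split
  · simp [hi]
  · rfl

lemma Zfun_meas {g : G.OS → ℝ} (hg0 : ∀ y, 0 < g y)
    (hgsum : ∀ x : G.OS, ∑' y : {y : G.OS // G.shiftOS y = x}, g y.1 = 1)
    (x : G.Space) : Measurable (Zfun G g x) := by
  haveI : Countable G.V := G.countableV
  apply Measurable.subtype_mk
  apply measurable_pi_lambda
  intro i
  by_cases hi : 0 ≤ i
  · have hconst : (fun t => zval G g x t i) = fun _ => x.1 i := by
      funext t
      unfold zval
      split
      · simp [hi]
      · rfl
    rw [hconst]
    exact measurable_const
  · apply measurable_to_countable'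
    intro v
    have hset : ((fun t => zval G g x t i) ⁻¹' {v}) =
        {t : ℝ | (0 ≤ t ∧ t < 1) ∧ pastF G g (G.projOS x) t (-(i + 1)).toNat = v} ∪
          (if x.1 i = v then {t : ℝ | ¬(0 ≤ t ∧ t < 1)} else ∅) := by
      ext t
      simp only [Set.mem_preimage, Set.mem_singleton_iff, Set.mem_union, Set.mem_setOf_eq]
      unfold zval
      by_cases ht : 0 ≤ t ∧ t < 1
      · rw [if_pos ht, if_neg hi]
        constructor
        · intro h; exact Or.inl ⟨ht, h⟩
        · rintro (⟨_, h⟩ | h)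
          · exact h
          · split at h
            · exact absurd ht h
            · exact absurd h (Set.notMem_empty t)
      · rw [if_neg ht]
        constructor
        · intro h
          refine Or.inr ?_
          rw [if_pos h]
          exact ht
        · rintro (⟨h, _⟩ | h)
          · exact absurd h ht
          · split at h
            · assumption
            · exact absurd h (Set.notMem_empty t)
    rw [hset]
    apply MeasurableSet.union
    · exact pastF_coord_meas hg0 hgsum _ _ _
    · split
      · have : {t : ℝ | ¬(0 ≤ t ∧ t < 1)} = (Set.Ico (0:ℝ) 1)ᶜ := rfl
        rw [this]
        exact measurableSet_Ico.compl
      · exact MeasurableSet.empty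

lemma coord_meas (i : ℤ) (c : G.V) : MeasurableSet {z : G.Space | z.1 i = c} := by
  have h1 : Measurable (fun z : G.Space => z.1 i) :=
    (measurable_pi_apply i).comp measurable_subtype_coe
  exact h1 (by trivial : MeasurableSet {c})

lemma WsLoc_meas (x : G.Space) : MeasurableSet (WsLoc G x) := by
  have h : WsLoc G x = ⋂ (i : ℤ), ⋂ (_ : 0 ≤ i), {z : G.Space | z.1 i = x.1 i} := by
    ext z
    simp only [WsLoc, Set.mem_setOf_eq, Set.mem_iInter]
  rw [h]
  exact MeasurableSet.iInter fun i => MeasurableSet.iInter fun _ => coord_meas i _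

lemma blockcyl_meas (z : G.Space) (n : ℕ) :
    MeasurableSet {y : G.Space | ∀ i : ℤ, -(n : ℤ) ≤ i → i ≤ -1 → y.1 i = z.1 i} := by
  have h : {y : G.Space | ∀ i : ℤ, -(n : ℤ) ≤ i → i ≤ -1 → y.1 i = z.1 i} =
      ⋂ (i : ℤ), ⋂ (_ : -(n : ℤ) ≤ i), ⋂ (_ : i ≤ -1), {y : G.Space | y.1 i = z.1 i} := by
    ext y
    simp only [Set.mem_setOf_eq, Set.mem_iInter]
  rw [h]
  exact MeasurableSet.iInter fun i => MeasurableSet.iInter fun _ =>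
    MeasurableSet.iInter fun _ => coord_meas i _

/-- The conditional measure on the local stable set of `x`. -/
noncomputable def mC (G : MarkovGraph) (g : G.OS → ℝ) (x : G.Space) : Measure G.Space :=
  Measure.map (Zfun G g x) (volume.restrict (Set.Ico (0:ℝ) 1))

lemma mC_prob {g : G.OS → ℝ} (hg0 : ∀ y, 0 < g y)
    (hgsum : ∀ x : G.OS, ∑' y : {y : G.OS // G.shiftOS y = x}, g y.1 = 1)
    (x : G.Space) : IsProbabilityMeasure (mC G g x) := by
  constructor
  rw [mC, Measure.map_apply (Zfun_meas hg0 hgsum x) MeasurableSet.univ]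
  simp [Real.volume_Ico]

lemma mC_null {g : G.OS → ℝ} (hg0 : ∀ y, 0 < g y)
    (hgsum : ∀ x : G.OS, ∑' y : {y : G.OS // G.shiftOS y = x}, g y.1 = 1)
    (x : G.Space) : mC G g x (WsLoc G x)ᶜ = 0 := by
  rw [mC, Measure.map_apply (Zfun_meas hg0 hgsum x) (WsLoc_meas x).compl]
  have h : Zfun G g x ⁻¹' (WsLoc G x)ᶜ = ∅ := by
    rw [Set.eq_empty_iff_forall_notMem]
    intro t ht
    exact ht (Zfun_mem_WsLoc g x t)
  rw [h]
  simp

/-- Identification of the forward words with the tails of `z`. -/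
lemma ufut_tail {g : G.OS → ℝ} (x : G.Space) (z : G.Space) (hz : z ∈ WsLoc G x) (j : ℕ) :
    ufut G (G.projOS x) (fun j => z.1 (-(j : ℤ) - 1)) j = G.tailOS z (-(j : ℤ)) := by
  induction j with
  | zero =>
      apply Subtype.ext
      funext i
      show (G.projOS x).1 i = z.1 (-((0:ℕ) : ℤ) + i)
      have h1 : (G.projOS x).1 i = x.1 (i : ℤ) := rfl
      have h2 : z.1 (-((0:ℕ) : ℤ) + i) = z.1 (i : ℤ) := congrArg z.1 (by push_cast; ring)
      rw [h1, h2, hz (i : ℤ) (by positivity)]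
  | succ j ih =>
      rw [ufut_succ, ih]
      have he : G.E (z.1 (-(j : ℤ) - 1)) ((G.tailOS z (-(j : ℤ))).1 0) := by
        have h1 := z.2 (-(j : ℤ) - 1)
        have h2 : (G.tailOS z (-(j : ℤ))).1 0 = z.1 (-(j : ℤ) - 1 + 1) :=
          congrArg z.1 (by push_cast; ring)
        rwa [← h2] at h1
      apply Subtype.ext
      funext i
      cases i with
      | zero =>
          rw [(consOS_spec he).1]
          show z.1 (-(j : ℤ) - 1) = z.1 (-((j+1 : ℕ) : ℤ) + ((0:ℕ) : ℤ))
          exact congrArg z.1 (by push_cast; ring)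
      | succ i =>
          rw [(consOS_spec he).2 i]
          show z.1 (-(j : ℤ) + (i : ℤ)) = z.1 (-((j+1 : ℕ) : ℤ) + ((i+1 : ℕ) : ℤ))
          exact congrArg z.1 (by push_cast; ring)

lemma cons_tail {g : G.OS → ℝ} (z : G.Space) (j : ℕ) :
    G.consOS (z.1 (-(j : ℤ) - 1)) (G.tailOS z (-(j : ℤ))) = G.tailOS z (-(j : ℤ) - 1) := by
  have he : G.E (z.1 (-(j : ℤ) - 1)) ((G.tailOS z (-(j : ℤ))).1 0) := by
    have h1 := z.2 (-(j : ℤ) - 1)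
    have h2 : (G.tailOS z (-(j : ℤ))).1 0 = z.1 (-(j : ℤ) - 1 + 1) :=
      congrArg z.1 (by push_cast; ring)
    rwa [← h2] at h1
  apply Subtype.ext
  funext i
  cases i with
  | zero =>
      rw [(consOS_spec he).1]
      show z.1 (-(j : ℤ) - 1) = z.1 (-(j : ℤ) - 1 + ((0:ℕ) : ℤ))
      exact congrArg z.1 (by push_cast; ring)
  | succ i =>
      rw [(consOS_spec he).2 i]
      show z.1 (-(j : ℤ) + (i : ℤ)) = z.1 (-(j : ℤ) - 1 + ((i+1 : ℕ) : ℤ))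
      exact congrArg z.1 (by push_cast; ring)

/-- The key cylinder-measure formula for the constructed measure. -/
lemma mC_cyl {g : G.OS → ℝ} (hg0 : ∀ y, 0 < g y)
    (hgsum : ∀ x : G.OS, ∑' y : {y : G.OS // G.shiftOS y = x}, g y.1 = 1)
    (x : G.Space) (z : G.Space) (hz : z ∈ WsLoc G x) (n : ℕ) (hn : 1 ≤ n) :
    mC G g x ({y : G.Space | ∀ i : ℤ, -(n : ℤ) ≤ i → i ≤ -1 → y.1 i = z.1 i} ∩ WsLoc G x) =
      ENNReal.ofReal (∏ j ∈ Finset.range n, g (G.tailOS z (-(j : ℤ) - 1))) := by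
  set w : ℕ → G.V := fun j => z.1 (-(j : ℤ) - 1) with hwdef
  have hedge : ∀ j, G.E (w j) ((ufut G (G.projOS x) w j).1 0) := by
    intro j
    rw [ufut_tail (g := g) x z hz j]
    have h1 := z.2 (-(j : ℤ) - 1)
    have h2 : (G.tailOS z (-(j : ℤ))).1 0 = z.1 (-(j : ℤ) - 1 + 1) :=
      congrArg z.1 (by push_cast; ring)
    rwa [← h2] at h1
  obtain ⟨A, hA0, hA1, hset⟩ := interval_main hg0 hgsum n (G.projOS x) w (fun j _ => hedge j)
  have hPw : Pw G g (G.projOS x) w n =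
      ∏ j ∈ Finset.range n, g (G.tailOS z (-(j : ℤ) - 1)) := by
    apply Finset.prod_congr rfl
    intro j _
    rw [ufut_tail (g := g) x z hz j]
    rw [cons_tail (g := g) z j]
  have hmeas : MeasurableSet
      ({y : G.Space | ∀ i : ℤ, -(n : ℤ) ≤ i → i ≤ -1 → y.1 i = z.1 i} ∩ WsLoc G x) :=
    (blockcyl_meas z n).inter (WsLoc_meas x)
  rw [mC, Measure.map_apply (Zfun_meas hg0 hgsum x) hmeas,
    Measure.restrict_apply ((Zfun_meas hg0 hgsum x) hmeas)]
  have hpre : Zfun G g x ⁻¹'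
      ({y : G.Space | ∀ i : ℤ, -(n : ℤ) ≤ i → i ≤ -1 → y.1 i = z.1 i} ∩ WsLoc G x) ∩
        Set.Ico (0:ℝ) 1 =
      {t : ℝ | (0 ≤ t ∧ t < 1) ∧ ∀ j < n, pastF G g (G.projOS x) t j = w j} := by
    ext t
    simp only [Set.mem_inter_iff, Set.mem_preimage, Set.mem_setOf_eq, Set.mem_Ico]
    constructor
    · rintro ⟨⟨hblock, _⟩, ht⟩
      refine ⟨ht, ?_⟩
      intro j hj
      have hb := hblock (-(j : ℤ) - 1) (by omega) (by omega)
      have hzv : (Zfun G g x t).1 (-(j : ℤ) - 1) =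
          pastF G g (G.projOS x) t (-((-(j : ℤ) - 1) + 1)).toNat := by
        show zval G g x t _ = _
        unfold zval
        rw [if_pos ht, if_neg (by omega)]
      have htn : (-((-(j : ℤ) - 1) + 1)).toNat = j := by omega
      rw [hzv, htn] at hb
      exact hb
    · rintro ⟨ht, hp⟩
      refine ⟨⟨?_, Zfun_mem_WsLoc g x t⟩, ht⟩
      intro i hi1 hi2
      have hj : (-(i + 1)).toNat < n := by omega
      have hzv : (Zfun G g x t).1 i = pastF G g (G.projOS x) t (-(i + 1)).toNat := by
        show zval G g x t _ = _
        unfold zval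
        rw [if_pos ht, if_neg (by omega)]
      rw [hzv, hp _ hj]
      show z.1 (-((-(i+1)).toNat : ℤ) - 1) = z.1 i
      exact congrArg z.1 (by omega)
  rw [hpre, hset, Real.volume_Ico]
  rw [← hPw]
  congr 1
  ring
end Stmt8
namespace Stmt8

open MarkovGraph MeasureTheory

variable {G : MarkovGraph}

/-- Backward block cylinders. -/
def Bcyl (G : MarkovGraph) (n : ℕ) (w : ℕ → G.V) : Set G.Space :=
  {y : G.Space | ∀ j < n, y.1 (-(j : ℤ) - 1) = w j}

/-- The π-system of backward block cylinders. -/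
def Pcyl (G : MarkovGraph) : Set (Set G.Space) :=
  {B | ∃ n : ℕ, 1 ≤ n ∧ ∃ w : ℕ → G.V, B = Bcyl G n w}

lemma Bcyl_meas (n : ℕ) (w : ℕ → G.V) : MeasurableSet (Bcyl G n w) := by
  have h : Bcyl G n w = ⋂ (j : ℕ), ⋂ (_ : j < n), {y : G.Space | y.1 (-(j : ℤ) - 1) = w j} := by
    ext y
    simp only [Bcyl, Set.mem_setOf_eq, Set.mem_iInter]
  rw [h]
  exact MeasurableSet.iInter fun j => MeasurableSet.iInter fun _ => coord_meas _ _

lemma Pcyl_meas {B : Set G.Space} (hB : B ∈ Pcyl G) : MeasurableSet B := by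
  obtain ⟨n, _, w, rfl⟩ := hB
  exact Bcyl_meas n w

lemma gen_le : MeasurableSpace.generateFrom (Pcyl G) ≤
    (inferInstance : MeasurableSpace G.Space) :=
  MeasurableSpace.generateFrom_le fun _ hB => Pcyl_meas hB

lemma Bcyl_inter {n n' : ℕ} {w w' : ℕ → G.V} (hnn : n ≤ n')
    (hne : (Bcyl G n w ∩ Bcyl G n' w').Nonempty) :
    Bcyl G n w ∩ Bcyl G n' w' = Bcyl G n' w' := by
  obtain ⟨y, hy1, hy2⟩ := hne
  apply Set.inter_eq_self_of_subset_right
  intro y' hy'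
  intro j hj
  rw [hy' j (by omega), ← hy2 j (by omega), hy1 j hj]

lemma Pcyl_pi : IsPiSystem (Pcyl G) := by
  rintro s ⟨n, hn, w, rfl⟩ t ⟨n', hn', w', rfl⟩ hne
  rcases le_total n n' with h | h
  · rw [Bcyl_inter h hne]
    exact ⟨n', hn', w', rfl⟩
  · rw [Set.inter_comm] at hne ⊢
    rw [Bcyl_inter h hne]
    exact ⟨n, hn, w, rfl⟩

section Unique

variable (g : G.OS → ℝ) (x : G.Space)

/-- The defining property of the conditional measure. -/
def CondProp (G : MarkovGraph) (g : G.OS → ℝ) (x : G.Space) (m : Measure G.Space) : Prop :=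
  IsProbabilityMeasure m ∧ m (WsLoc G x)ᶜ = 0 ∧
    ∀ z ∈ WsLoc G x, ∀ n : ℕ, 1 ≤ n →
      m ({y : G.Space | ∀ i : ℤ, -(n : ℤ) ≤ i → i ≤ -1 → y.1 i = z.1 i} ∩ WsLoc G x) =
        ENNReal.ofReal (∏ j ∈ Finset.range n, g (G.tailOS z (-(j : ℤ) - 1)))

lemma cond_W_one {m : Measure G.Space} (h : CondProp G g x m) : m (WsLoc G x) = 1 := by
  obtain ⟨hp, h0, _⟩ := h
  have := measure_add_measure_compl (μ := m) (WsLoc_meas x)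
  rw [h0, add_zero] at this
  rw [this]
  exact measure_univ

lemma cond_basic {m₁ m₂ : Measure G.Space} (h₁ : CondProp G g x m₁) (h₂ : CondProp G g x m₂)
    {B : Set G.Space} (hB : B ∈ Pcyl G) :
    m₁ (B ∩ WsLoc G x) = m₂ (B ∩ WsLoc G x) := by
  obtain ⟨n, hn, w, rfl⟩ := hB
  by_cases hne : (Bcyl G n w ∩ WsLoc G x).Nonempty
  · obtain ⟨z, hzB, hzW⟩ := hne
    have hBW : Bcyl G n w ∩ WsLoc G x =
        {y : G.Space | ∀ i : ℤ, -(n : ℤ) ≤ i → i ≤ -1 → y.1 i = z.1 i} ∩ WsLoc G x := by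
      ext y
      simp only [Set.mem_inter_iff, Bcyl, Set.mem_setOf_eq]
      constructor
      · rintro ⟨hyB, hyW⟩
        refine ⟨?_, hyW⟩
        intro i hi1 hi2
        have hj : (-(i + 1)).toNat < n := by omega
        have e1 : y.1 i = y.1 (-(((-(i + 1)).toNat : ℕ) : ℤ) - 1) := congrArg y.1 (by omega)
        have e2 : z.1 i = z.1 (-(((-(i + 1)).toNat : ℕ) : ℤ) - 1) := congrArg z.1 (by omega)
        rw [e1, e2, hyB _ hj, hzB _ hj]
      · rintro ⟨hyB, hyW⟩
        refine ⟨?_, hyW⟩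
        intro j hj
        have hb := hyB (-(j : ℤ) - 1) (by omega) (by omega)
        rw [hb]
        exact hzB j hj
    rw [hBW, h₁.2.2 z hzW n hn, h₂.2.2 z hzW n hn]
  · rw [Set.not_nonempty_iff_eq_empty] at hne
    rw [hne]
    simp

lemma cond_gen {m₁ m₂ : Measure G.Space} (h₁ : CondProp G g x m₁) (h₂ : CondProp G g x m₂) :
    ∀ B, MeasurableSet[MeasurableSpace.generateFrom (Pcyl G)] B →
      m₁ (B ∩ WsLoc G x) = m₂ (B ∩ WsLoc G x) := by
  haveI := h₁.1
  haveI := h₂.1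
  refine MeasurableSpace.induction_on_inter
    (m := MeasurableSpace.generateFrom (Pcyl G))
    (C := fun B _ => m₁ (B ∩ WsLoc G x) = m₂ (B ∩ WsLoc G x))
    (s := Pcyl G) rfl Pcyl_pi (by simp) (fun B hB => cond_basic g x h₁ h₂ hB) ?_ ?_
  · -- complements
    intro B hBgen hC
    have hBm : MeasurableSet B := gen_le _ hBgen
    have hsplit : ∀ m : Measure G.Space, m (B ∩ WsLoc G x) + m (Bᶜ ∩ WsLoc G x) =
        m (WsLoc G x) := by
      intro m
      rw [← measure_union ?hd ((hBm.compl).inter (WsLoc_meas x))]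
      · congr 1
        ext y
        by_cases hy : y ∈ B <;> simp [hy]
      · exact Disjoint.mono Set.inter_subset_left Set.inter_subset_left
          disjoint_compl_right
    have e1 := hsplit m₁
    have e2 := hsplit m₂
    rw [cond_W_one g x h₁] at e1
    rw [cond_W_one g x h₂] at e2
    have e3 : m₁ (B ∩ WsLoc G x) + m₁ (Bᶜ ∩ WsLoc G x) =
        m₁ (B ∩ WsLoc G x) + m₂ (Bᶜ ∩ WsLoc G x) := by
      rw [e1, hC, e2]
    exact (ENNReal.add_right_inj (measure_ne_top m₁ _)).1 e3
  · -- disjoint unions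
    intro f hdisj hfgen hC
    have hfm : ∀ i, MeasurableSet (f i ∩ WsLoc G x) :=
      fun i => (gen_le _ (hfgen i)).inter (WsLoc_meas x)
    have hdisj' : Pairwise (Function.onFun Disjoint fun i => f i ∩ WsLoc G x) :=
      fun i j hij => Disjoint.mono Set.inter_subset_left Set.inter_subset_left (hdisj hij)
    rw [Set.iUnion_inter, measure_iUnion hdisj' hfm, measure_iUnion hdisj' hfm]
    exact tsum_congr hC

/-- Every measurable set agrees with a set in the cylinder σ-algebra on `WsLoc x`. -/
lemma trace_lemma (x : G.Space) (A : Set G.Space) (hA : MeasurableSet A) :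
    ∃ B, MeasurableSet[MeasurableSpace.generateFrom (Pcyl G)] B ∧
      A ∩ WsLoc G x = B ∩ WsLoc G x := by
  haveI : Countable G.V := G.countableV
  obtain ⟨A', hA', hpre⟩ :
      ∃ A' : Set (ℤ → G.V), MeasurableSet A' ∧ Subtype.val ⁻¹' A' = A :=
    MeasurableSpace.measurableSet_comap.1 hA
  subst hpre
  clear hA
  have h2 : MeasurableSpace.GenerateMeasurable
      {s : Set (ℤ → G.V) | ∃ i : ℤ,
        MeasurableSet[MeasurableSpace.comap (fun b : ℤ → G.V => b i) ⊤] s} A' := by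
    have h3 : MeasurableSet[⨆ i : ℤ, MeasurableSpace.comap (fun b : ℤ → G.V => b i)
        (⊤ : MeasurableSpace G.V)] A' := hA'
    exact MeasurableSpace.measurableSet_iSup.1 h3
  clear hA'
  induction h2 with
  | basic s hs =>
      obtain ⟨i, hi⟩ := hs
      obtain ⟨s', _, rfl⟩ := MeasurableSpace.measurableSet_comap.1 hi
      by_cases hipos : 0 ≤ i
      · by_cases hin : x.1 i ∈ s'
        · refine ⟨Set.univ, @MeasurableSet.univ _ (MeasurableSpace.generateFrom (Pcyl G)), ?_⟩
          rw [Set.univ_inter]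
          apply Set.inter_eq_self_of_subset_right
          intro y hy
          show y.1 i ∈ s'
          rw [hy i hipos]
          exact hin
        · refine ⟨∅, @MeasurableSet.empty _ (MeasurableSpace.generateFrom (Pcyl G)), ?_⟩
          rw [Set.empty_inter, Set.eq_empty_iff_forall_notMem]
          rintro y ⟨hyA, hyW⟩
          have : y.1 i ∈ s' := hyA
          rw [hyW i hipos] at this
          exact hin this
      · set k := (-(i + 1)).toNat with hk
        have hik : i = -(k : ℤ) - 1 := by omega
        refine ⟨⋃ (w : Fin (k + 1) → G.V) (_ : w ⟨k, Nat.lt_succ_self k⟩ ∈ s'),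
          Bcyl G (k + 1) (fun j => if h : j < k + 1 then w ⟨j, h⟩
            else w ⟨k, Nat.lt_succ_self k⟩), ?_, ?_⟩
        · exact @MeasurableSet.iUnion _ _ (MeasurableSpace.generateFrom (Pcyl G)) _ _
            fun w => @MeasurableSet.iUnion _ _ (MeasurableSpace.generateFrom (Pcyl G)) _ _
              fun _ => MeasurableSpace.measurableSet_generateFrom ⟨k + 1, by omega, _, rfl⟩
        · ext y
          simp only [Set.mem_inter_iff, Set.mem_preimage, Set.mem_iUnion, Bcyl,
            Set.mem_setOf_eq]
          constructor
          · rintro ⟨hyA, hyW⟩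
            refine ⟨⟨fun j => y.1 (-(j.1 : ℤ) - 1), ?_, ?_⟩, hyW⟩
            · show y.1 (-(k : ℤ) - 1) ∈ s'
              have e1 : y.1 (-(k : ℤ) - 1) = y.1 i := congrArg y.1 (by omega)
              rw [e1]
              exact hyA
            · intro j hj
              rw [dif_pos hj]
          · rintro ⟨⟨w, hw, hp⟩, hyW⟩
            refine ⟨?_, hyW⟩
            show y.1 i ∈ s'
            have e1 : y.1 i = y.1 (-(k : ℤ) - 1) := congrArg y.1 (by omega)
            have e2 := hp k (Nat.lt_succ_self k)
            rw [dif_pos (Nat.lt_succ_self k)] at e2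
            rw [e1, e2]
            exact hw
  | empty =>
      exact ⟨∅, @MeasurableSet.empty _ (MeasurableSpace.generateFrom (Pcyl G)), Set.ext fun _ => Iff.rfl⟩
  | compl s hs ih =>
      obtain ⟨B, hB, heq⟩ := ih
      refine ⟨Bᶜ, @MeasurableSet.compl _ _ (MeasurableSpace.generateFrom (Pcyl G)) hB, ?_⟩
      ext y
      simp only [Set.mem_inter_iff, Set.mem_preimage, Set.mem_compl_iff]
      constructor
      · rintro ⟨hyA, hyW⟩
        refine ⟨?_, hyW⟩
        intro hyB
        have : y ∈ Subtype.val ⁻¹' s ∩ WsLoc G x := by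
          exact (Set.ext_iff.1 heq y).2 ⟨hyB, hyW⟩
        exact hyA this.1
      · rintro ⟨hyB, hyW⟩
        refine ⟨?_, hyW⟩
        intro hys
        have : y ∈ B ∩ WsLoc G x := by
          exact (Set.ext_iff.1 heq y).1 ⟨hys, hyW⟩
        exact hyB this.1
  | iUnion f _ ih =>
      choose B hB heq using ih
      refine ⟨⋃ n, B n, @MeasurableSet.iUnion _ _ (MeasurableSpace.generateFrom (Pcyl G)) _ _ hB, ?_⟩
      ext y
      constructor
      · rintro ⟨hy, hyW⟩
        have hy' : y.1 ∈ ⋃ i, f i := hy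
        obtain ⟨i, hi⟩ := Set.mem_iUnion.1 hy'
        exact ⟨Set.mem_iUnion.2 ⟨i, ((Set.ext_iff.1 (heq i) y).1 ⟨hi, hyW⟩).1⟩, hyW⟩
      · rintro ⟨hy, hyW⟩
        obtain ⟨i, hi⟩ := Set.mem_iUnion.1 hy
        exact ⟨(Set.mem_iUnion.2 ⟨i, ((Set.ext_iff.1 (heq i) y).2 ⟨hi, hyW⟩).1⟩ :
          y.1 ∈ ⋃ i, f i), hyW⟩

/-- Uniqueness of the conditional measure. -/
lemma cond_unique {m₁ m₂ : Measure G.Space} (h₁ : CondProp G g x m₁)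
    (h₂ : CondProp G g x m₂) : m₁ = m₂ := by
  haveI := h₁.1
  haveI := h₂.1
  apply Measure.ext
  intro A hA
  have hred : ∀ m : Measure G.Space, m (WsLoc G x)ᶜ = 0 → m A = m (A ∩ WsLoc G x) := by
    intro m hm
    have h3 := measure_inter_add_diff A (WsLoc_meas x) (μ := m)
    have h4 : m (A \ WsLoc G x) = 0 :=
      le_antisymm (le_trans (measure_mono (Set.diff_subset_compl A _)) hm.le) zero_le
    rw [h4, add_zero] at h3
    exact h3.symm
  rw [hred m₁ h₁.2.1, hred m₂ h₂.2.1]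
  obtain ⟨B, hB, heq⟩ := trace_lemma x A hA
  rw [heq]
  exact cond_gen g x h₁ h₂ B hB

end Unique

end Stmt8
namespace Stmt8

open MarkovGraph MeasureTheory Filter

variable {G : MarkovGraph}

/-- Non-atomicity of any measure satisfying the conditional property. -/
lemma atomless {g : G.OS → ℝ} (hTrans : TopTransitive G) (hNotCycle : ¬ IsCycleGraph G)
    (hg0 : ∀ y, 0 < g y) (hg1 : ∀ y, g y ≤ 1)
    (hgsum : ∀ x : G.OS, ∑' y : {y : G.OS // G.shiftOS y = x}, g y.1 = 1)
    (hlogbdd : ∃ M : ℝ, ∀ y, |Real.log (g y)| ≤ M)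
    (x : G.Space) (m : Measure G.Space) (hm : CondProp G g x m) (z : G.Space) :
    m {z} = 0 := by
  haveI := hm.1
  by_cases hz : z ∈ WsLoc G x
  · obtain ⟨M, hM⟩ := hlogbdd
    have hMnn : 0 ≤ M := le_trans (abs_nonneg _) (hM (G.projOS x))
    set ρ := 1 - Real.exp (-M) with hρdef
    have hρ0 : 0 ≤ ρ := by
      have : Real.exp (-M) ≤ 1 := Real.exp_le_one_iff.2 (by linarith)
      linarith
    have hρ1 : ρ < 1 := by
      have : 0 < Real.exp (-M) := Real.exp_pos _
      linarith
    have hglb : ∀ y, Real.exp (-M) ≤ g y := by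
      intro y
      have h1 : -M ≤ Real.log (g y) := neg_le_of_abs_le (hM y)
      calc Real.exp (-M) ≤ Real.exp (Real.log (g y)) := Real.exp_le_exp.2 h1
        _ = g y := Real.exp_log (hg0 y)
    set q : ℕ → ℝ := fun n => ∏ j ∈ Finset.range n, g (G.tailOS z (-(j : ℤ) - 1)) with hqdef
    have hq0 : ∀ n, 0 < q n := fun n => Finset.prod_pos fun _ _ => hg0 _
    have hqsucc : ∀ n, q (n + 1) = q n * g (G.tailOS z (-(n : ℤ) - 1)) := fun n =>
      Finset.prod_range_succ _ n
    have hqanti : ∀ a b, a ≤ b → q b ≤ q a := by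
      have hstep : ∀ n, q (n + 1) ≤ q n := by
        intro n
        rw [hqsucc]
        exact mul_le_of_le_one_right (hq0 n).le (hg1 _)
      intro a b hab
      induction b with
      | zero => have : a = 0 := by omega
                rw [this]
      | succ b ih =>
          rcases Nat.lt_or_ge a (b + 1) with h | h
          · exact le_trans (hstep b) (ih (by omega))
          · have : a = b + 1 := by omega
            rw [this]
    have hfactor : ∀ j : ℕ, G.Multi (z.1 (-(j : ℤ))) → g (G.tailOS z (-(j : ℤ) - 1)) ≤ ρ := by
      intro j hmulti
      obtain ⟨b, c, hbc, hb, hc⟩ := hmulti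
      set u := G.tailOS z (-(j : ℤ)) with hudef
      have hu0 : u.1 0 = z.1 (-(j : ℤ)) := congrArg z.1 (by omega)
      set a₀ := z.1 (-(j : ℤ) - 1) with ha₀def
      have he : G.E a₀ (u.1 0) := by
        have h1 := z.2 (-(j : ℤ) - 1)
        have h2 : u.1 0 = z.1 (-(j : ℤ) - 1 + 1) := congrArg z.1 (by omega)
        rwa [← h2] at h1
      obtain ⟨b', hb'ne, hb'⟩ : ∃ b', b' ≠ a₀ ∧ G.E b' (u.1 0) := by
        rcases eq_or_ne b a₀ with rfl | hba
        · exact ⟨c, fun hca => hbc hca.symm, by rw [hu0]; exact hc⟩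
        · exact ⟨b, hba, by rw [hu0]; exact hb⟩
      have hgtail : g (G.tailOS z (-(j : ℤ) - 1)) = g (G.consOS a₀ u) := by
        rw [cons_tail (g := g) z j]
      have hpair : ({⟨a₀, he⟩, ⟨b', hb'⟩} : Finset {a : G.V // G.E a (u.1 0)}).sum
          (fun a => g (G.consOS a.1 u)) = g (G.consOS a₀ u) + g (G.consOS b' u) := by
        apply Finset.sum_pair
        intro hcontra
        exact hb'ne (congrArg Subtype.val hcontra).symm
      have hsum_le : g (G.consOS a₀ u) + g (G.consOS b' u) ≤ 1 := by
        rw [← hpair]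
        exact sum_le_hasSum _ (fun a _ => (hg0 _).le) (hasSum_wt g hg0 hgsum u)
      have := hglb (G.consOS b' u)
      rw [hgtail]
      rw [hρdef]
      linarith
    have hsmall : ∀ k : ℕ, ∃ n, q n ≤ ρ ^ k := by
      intro k
      induction k with
      | zero => exact ⟨0, by simp [hqdef]⟩
      | succ k ih =>
          obtain ⟨n, hn⟩ := ih
          obtain ⟨j, hjn, hjm⟩ := exists_multi hTrans hNotCycle z n
          refine ⟨j + 1, ?_⟩
          have h1 : q (j + 1) = q j * g (G.tailOS z (-(j : ℤ) - 1)) := hqsucc j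
          have h2 : g (G.tailOS z (-(j : ℤ) - 1)) ≤ ρ := hfactor j hjm
          have h3 : q j ≤ ρ ^ k := le_trans (hqanti n j hjn) hn
          calc q (j + 1) = q j * g (G.tailOS z (-(j : ℤ) - 1)) := h1
            _ ≤ ρ ^ k * ρ := by
                apply mul_le_mul h3 h2 (hg0 _).le (by positivity)
            _ = ρ ^ (k + 1) := by ring
    have htend : Tendsto q atTop (nhds 0) := by
      rw [Metric.tendsto_atTop]
      intro ε hε
      obtain ⟨k, hk⟩ := exists_pow_lt_of_lt_one hε hρ1
      obtain ⟨n₀, hn₀⟩ := hsmall k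
      refine ⟨n₀, fun n hn => ?_⟩
      rw [Real.dist_eq, sub_zero, abs_of_pos (hq0 n)]
      exact lt_of_le_of_lt (le_trans (hqanti n₀ n hn) hn₀) hk
    have hle : ∀ n : ℕ, m {z} ≤ ENNReal.ofReal (q (n + 1)) := by
      intro n
      have hsub : {z} ⊆
          {y : G.Space | ∀ i : ℤ, -((n + 1 : ℕ) : ℤ) ≤ i → i ≤ -1 → y.1 i = z.1 i} ∩
            WsLoc G x := by
        intro y hy
        rw [Set.mem_singleton_iff] at hy
        subst hy
        exact ⟨fun i _ _ => rfl, hz⟩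
      calc m {z} ≤ _ := measure_mono hsub
        _ = ENNReal.ofReal (q (n + 1)) := hm.2.2 z hz (n + 1) (by omega)
    have htend2 : Tendsto (fun n : ℕ => ENNReal.ofReal (q (n + 1))) atTop (nhds 0) := by
      have h1 : Tendsto (fun n : ℕ => q (n + 1)) atTop (nhds 0) :=
        htend.comp (tendsto_add_atTop_nat 1)
      have h2 := ENNReal.tendsto_ofReal h1
      simpa using h2
    have := ge_of_tendsto' htend2 hle
    exact le_antisymm this zero_le
  · apply le_antisymm _ zero_le
    calc m {z} ≤ m (WsLoc G x)ᶜ := by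
          apply measure_mono
          intro y hy
          rw [Set.mem_singleton_iff] at hy
          subst hy
          exact hz
      _ = 0 := hm.2.1

end Stmt8
open MarkovGraph in
/-- Existence and uniqueness of the conditional measures ν(·|x_0^∞) on
local stable sets determined by the `g`-function, and their non-atomicity for ν-a.e. x. -/
theorem statement8 (G : MarkovGraph)
    (hTrans : TopTransitive G) (hNotCycle : ¬ IsCycleGraph G)
    (g : G.OS → ℝ) (hg0 : ∀ y, 0 < g y) (hg1 : ∀ y, g y ≤ 1)
    (hgsum : ∀ x : G.OS, ∑' y : {y : G.OS // G.shiftOS y = x}, g y.1 = 1)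
    (hlogbdd : ∃ M : ℝ, ∀ y, |Real.log (g y)| ≤ M)
    (hgHolder : ∃ C : ℝ, 0 < C ∧ ∃ θ : ℝ, 0 < θ ∧ θ < 1 ∧
      ∀ (u v : G.OS) (k : ℕ), 1 ≤ k → (∀ i ≤ k, u.1 i = v.1 i) →
        |Real.log (g u) - Real.log (g v)| ≤ C * θ ^ k)
    (ν : Measure G.Space) (hνp : IsProbabilityMeasure ν)
    (hνinv : MeasurePreserving (fun z => G.shift z) ν ν)
    (hνerg : ∀ A : Set G.Space, MeasurableSet A → (fun z => G.shift z) ⁻¹' A = A →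
      ν A = 0 ∨ ν A = 1)
    (hνpos : ∀ (x : G.Space) (a b : ℤ), 0 < ν (cylZ G x a b))
    (hcyl : ∀ (w : ℕ → G.V) (k : ℕ), 1 ≤ k → (∀ i < k, G.E (w i) (w (i + 1))) →
      Measure.map (G.projOS) ν {y : G.OS | ∀ i ≤ k, y.1 i = w i} =
        ∫⁻ y in {y : G.OS | ∀ i ≤ k - 1, y.1 i = w (i + 1)},
          ENNReal.ofReal (g (G.consOS (w 0) y)) ∂(Measure.map (G.projOS) ν)) :
    (∀ x : G.Space, ∃! m : Measure G.Space,
      IsProbabilityMeasure m ∧ m (WsLoc G x)ᶜ = 0 ∧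
      ∀ z ∈ WsLoc G x, ∀ n : ℕ, 1 ≤ n →
        m ({y : G.Space | ∀ i : ℤ, -(n : ℤ) ≤ i → i ≤ -1 → y.1 i = z.1 i} ∩ WsLoc G x) =
          ENNReal.ofReal (∏ j ∈ Finset.range n, g (tailOS G z (-(j : ℤ) - 1)))) ∧
    (∀ᵐ x ∂ν, ∀ m : Measure G.Space,
      (IsProbabilityMeasure m ∧ m (WsLoc G x)ᶜ = 0 ∧
        ∀ z ∈ WsLoc G x, ∀ n : ℕ, 1 ≤ n →
          m ({y : G.Space | ∀ i : ℤ, -(n : ℤ) ≤ i → i ≤ -1 → y.1 i = z.1 i} ∩ WsLoc G x) =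
            ENNReal.ofReal (∏ j ∈ Finset.range n, g (tailOS G z (-(j : ℤ) - 1)))) →
      ∀ z : G.Space, m {z} = 0) := by
  constructor
  · intro x
    have hC : Stmt8.CondProp G g x (Stmt8.mC G g x) :=
      ⟨Stmt8.mC_prob hg0 hgsum x, Stmt8.mC_null hg0 hgsum x,
        fun z hz n hn => Stmt8.mC_cyl hg0 hgsum x z hz n hn⟩
    exact ⟨Stmt8.mC G g x, hC, fun m' hm' => Stmt8.cond_unique g x hm' hC⟩
  · exact MeasureTheory.ae_of_all ν
      (fun x m hm z => Stmt8.atomless hTrans hNotCycle hg0 hg1 hgsum hlogbdd x m hm z)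
end

section
/- Let σ:Σ→Σ be a topologically transitive topological Markov shift and ν a σ-invariant Borel probability measure on Σ giving positive measure to every nonempty cylinder. Suppose that for every edge v→w of the graph there is a constant C_{vw}>1 such that for all m<0, n>0 and every nonempty cylinder _m[v_m,…,v_n] with v_0=v and v_1=w: C_{vw}^{−1} ≤ ν(_m[v_m,…,v_n]) / (ν(_m[v_m,…,v_0])·ν(_0[v_0,…,v_n])) ≤ C_{vw}. Then for all x,y∈Σ with x_0 = y_0 = v and every edge v→w, every Borel set E ⊂ [v]∩σ^{−1}[w] satisfies C_{vw}^{−1}·(ν^s_x ⋆ ν^u_y)(E) ≤ ν(E) ≤ C_{vw}·(ν^s_x ⋆ ν^u_y)(E); in particular ν^s_x ⋆ ν^u_y and the restriction of ν to [v] = {z : z_0 = v} are mutually absolutely continuous, i.e., ν has local product structure. -/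
open MeasureTheory Filter Set
open scoped Classical

namespace MarkovGraph

variable (G : MarkovGraph)

/-- The Smale bracket [x,y]: z_i = x_i for i ≤ 0 and z_i = y_i for i ≥ 0 (defined when
x_0 = y_0; junk value `x` otherwise). -/
noncomputable def bracket (x y : G.Space) : G.Space :=
  if h : x.1 0 = y.1 0 then
    ⟨fun i => if i ≤ 0 then x.1 i else y.1 i, by
      intro i
      by_cases h1 : i + 1 ≤ 0
      · have h0 : i ≤ 0 := by omega
        simp only [if_pos h0, if_pos h1]
        exact x.2 i
      · by_cases h0 : i ≤ 0
        · have hi : i = 0 := by omega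
          subst hi
          simp only [if_pos h0, if_neg h1]
          rw [h]
          exact y.2 0
        · simp only [if_neg h0, if_neg h1]
          exact y.2 i⟩
  else x

/-- The projection measure ν^s_x = ν ∘ (p^s_x)⁻¹ on W^s_loc(x), where
p^s_x(z) = [z,x] on the cylinder [x_0]. -/
noncomputable def nuS (ν : Measure G.Space) (x : G.Space) : Measure G.Space :=
  Measure.map (fun z => bracket G z x) (ν.restrict {z : G.Space | z.1 0 = x.1 0})

/-- The projection measure ν^u_y = ν ∘ (p^u_y)⁻¹ on W^u_loc(y), where
p^u_y(z) = [y,z] on the cylinder [y_0]. -/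
noncomputable def nuU (ν : Measure G.Space) (y : G.Space) : Measure G.Space :=
  Measure.map (fun z => bracket G y z) (ν.restrict {z : G.Space | z.1 0 = y.1 0})

/-- The Smale bracket of two measures:
(μs ⋆ μu)(E) = ∫∫ 1_E([x',y']) dμs(x') dμu(y'). -/
noncomputable def star (μs μu : Measure G.Space) (E : Set G.Space) : ENNReal :=
  ∫⁻ y', ∫⁻ x', E.indicator (fun _ => (1 : ENNReal)) (bracket G x' y') ∂μs ∂μu

end MarkovGraph

namespace MarkovGraph

variable (G : MarkovGraph)

lemma measurable_coord (i : ℤ) : Measurable fun z : G.Space => z.1 i :=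
  (measurable_pi_apply i).comp measurable_subtype_coe

lemma measurableSet_V (s : Set G.V) : MeasurableSet s := trivial

lemma bracket_val (x y : G.Space) (i : ℤ) :
    (bracket G x y).1 i = if x.1 0 = y.1 0 then (if i ≤ 0 then x.1 i else y.1 i) else x.1 i := by
  unfold bracket
  by_cases h : x.1 0 = y.1 0
  · split_ifs <;> simp_all
  · split_ifs <;> simp_all

lemma measurableSet_eqcoord {α : Type*} [MeasurableSpace α] {f g : α → G.V}
    (hf : Measurable f) (hg : Measurable g) : MeasurableSet {a | f a = g a} := by
  haveI := G.countableV
  have : {a | f a = g a} = ⋃ v : G.V, (f ⁻¹' {v}) ∩ (g ⁻¹' {v}) := by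
    ext a; simp only [mem_setOf_eq, mem_iUnion, mem_inter_iff, mem_preimage, mem_singleton_iff]
    constructor
    · intro h; exact ⟨f a, rfl, h.symm⟩
    · rintro ⟨v, h1, h2⟩; rw [h1, h2]
  rw [this]
  exact MeasurableSet.iUnion fun v =>
    ((hf (measurableSet_V G _)).inter (hg (measurableSet_V G _)))

lemma measurable_bracket2 : Measurable fun p : G.Space × G.Space => bracket G p.1 p.2 := by
  have hval : Measurable fun p : G.Space × G.Space => (bracket G p.1 p.2).1 := by
    apply measurable_pi_lambda
    intro i
    have : (fun p : G.Space × G.Space => (bracket G p.1 p.2).1 i) =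
        fun p => if p.1.1 0 = p.2.1 0 then (if i ≤ 0 then p.1.1 i else p.2.1 i) else p.1.1 i := by
      funext p; exact bracket_val G p.1 p.2 i
    rw [this]
    apply Measurable.ite
    · exact measurableSet_eqcoord G ((measurable_coord G 0).comp measurable_fst)
        ((measurable_coord G 0).comp measurable_snd)
    · by_cases h : i ≤ 0 <;> simp only [if_pos, if_neg, h, if_true, if_false]
      · exact (measurable_coord G i).comp measurable_fst
      · exact (measurable_coord G i).comp measurable_snd
    · exact (measurable_coord G i).comp measurable_fst
  exact Measurable.subtype_mk hval

lemma measurable_bracket_left (c : G.Space) : Measurable fun z : G.Space => bracket G z c :=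
  (measurable_bracket2 G).comp (measurable_id.prodMk measurable_const)

lemma measurable_bracket_right (c : G.Space) : Measurable fun z : G.Space => bracket G c z :=
  (measurable_bracket2 G).comp (measurable_const.prodMk measurable_id)

lemma bracket_bracket (x y a b : G.Space) (hxy : x.1 0 = y.1 0)
    (ha : a.1 0 = x.1 0) (hb : b.1 0 = y.1 0) :
    bracket G (bracket G a x) (bracket G y b) = bracket G a b := by
  have hyb : y.1 0 = b.1 0 := hb.symm
  have hab : a.1 0 = b.1 0 := by rw [ha, hxy, hb]
  have hax : ∀ j, (bracket G a x).1 j = if j ≤ 0 then a.1 j else x.1 j := fun j => by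
    rw [bracket_val, if_pos ha]
  have hybv : ∀ j, (bracket G y b).1 j = if j ≤ 0 then y.1 j else b.1 j := fun j => by
    rw [bracket_val, if_pos hyb]
  have habv : ∀ j, (bracket G a b).1 j = if j ≤ 0 then a.1 j else b.1 j := fun j => by
    rw [bracket_val, if_pos hab]
  have h1 : (bracket G a x).1 0 = (bracket G y b).1 0 := by
    rw [hax 0, hybv 0]
    simp only [le_refl, if_true]
    rw [ha, hxy]
  apply Subtype.ext
  funext i
  rw [bracket_val _ _ _ i, if_pos h1, habv i]
  by_cases h : i ≤ 0
  · rw [if_pos h, if_pos h, hax i, if_pos h]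
  · rw [if_neg h, if_neg h, hybv i, if_neg h]


lemma measurableSet_cylZ (z : G.Space) (a b : ℤ) : MeasurableSet (cylZ G z a b) := by
  have : cylZ G z a b = ⋂ i ∈ Set.Icc a b, {y : G.Space | y.1 i = z.1 i} := by
    ext y
    simp only [cylZ, Set.mem_setOf_eq, Set.mem_iInter, Set.mem_Icc]
    constructor
    · intro h i hi; exact h i hi.1 hi.2
    · intro h i h1 h2; exact h i ⟨h1, h2⟩
  rw [this]
  exact MeasurableSet.biInter (Set.to_countable _) fun i _ =>
    measurableSet_eqcoord G (measurable_coord G i) measurable_const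

/-- `A` is determined by the coordinates in the window `[-k, k]`. -/
def Win (k : ℕ) (A : Set G.Space) : Prop :=
  ∀ ⦃z y : G.Space⦄, (∀ i : ℤ, -(k : ℤ) ≤ i → i ≤ (k : ℤ) → z.1 i = y.1 i) → z ∈ A → y ∈ A

/-- The algebra of window-determined sets. -/
def Alg : Set (Set G.Space) := {A | ∃ k, Win G k A}

variable {G}

lemma Win.mono {k k' : ℕ} {A : Set G.Space} (h : Win G k A) (hkk : k ≤ k') : Win G k' A := by
  intro z y hzy hz
  exact h (fun i h1 h2 => hzy i (by omega) (by omega)) hz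

lemma isSetAlgebra_Alg : MeasureTheory.IsSetAlgebra (Alg G) where
  empty_mem := ⟨0, fun z y _ hz => hz⟩
  compl_mem := by
    rintro A ⟨k, hk⟩
    refine ⟨k, fun z y hzy hz hyA => ?_⟩
    exact hz (hk (fun i h1 h2 => (hzy i h1 h2).symm) hyA)
  union_mem := by
    rintro A B ⟨k, hk⟩ ⟨l, hl⟩
    refine ⟨max k l, fun z y hzy hz => ?_⟩
    rcases hz with hz | hz
    · exact Or.inl ((hk.mono (le_max_left k l)) hzy hz)
    · exact Or.inr ((hl.mono (le_max_right k l)) hzy hz)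

variable (G)

/-- The finite-window observation map. -/
def obs (k : ℕ) (z : G.Space) : Fin (2 * k + 1) → G.V := fun j => z.1 ((j : ℤ) - k)

lemma measurable_obs (k : ℕ) : Measurable (obs G k) :=
  measurable_pi_lambda _ fun j => measurable_coord G ((j : ℤ) - k)

lemma obs_eq_win {k : ℕ} {z y : G.Space} (h : obs G k y = obs G k z) :
    ∀ i : ℤ, -(k : ℤ) ≤ i → i ≤ (k : ℤ) → y.1 i = z.1 i := by
  intro i h1 h2
  have hj : (i + k).toNat < 2 * k + 1 := by omega
  have h0 : ((⟨(i + k).toNat, hj⟩ : Fin (2 * k + 1)) : ℤ) = ((i + k).toNat : ℤ) := rfl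
  have h3 := congrFun h (⟨(i + k).toNat, hj⟩ : Fin (2 * k + 1))
  simp only [obs, h0] at h3
  rwa [show ((i + k).toNat : ℤ) - k = i by omega] at h3

lemma measurableSet_fiber (k : ℕ) (t : Fin (2 * k + 1) → G.V) :
    MeasurableSet (obs G k ⁻¹' {t}) := by
  have : obs G k ⁻¹' {t} = ⋂ j : Fin (2 * k + 1), {y : G.Space | y.1 ((j : ℤ) - k) = t j} := by
    ext y
    simp only [Set.mem_preimage, Set.mem_singleton_iff, Set.mem_iInter, Set.mem_setOf_eq,
      funext_iff, obs]
  rw [this]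
  exact MeasurableSet.iInter fun j =>
    measurableSet_eqcoord G (measurable_coord G _) measurable_const

lemma fiber_eq_cylZ (k : ℕ) (z : G.Space) :
    obs G k ⁻¹' {obs G k z} = cylZ G z (-(k : ℤ)) k := by
  ext y
  constructor
  · intro hy
    intro i h1 h2
    exact obs_eq_win G (Set.mem_singleton_iff.1 hy) i h1 h2
  · intro hy
    apply Set.mem_singleton_iff.2
    funext j
    exact hy ((j : ℤ) - k) (by omega) (by have := j.isLt; omega)

variable {G}

lemma Win.measurableSet {k : ℕ} {A : Set G.Space} (h : Win G k A) : MeasurableSet A := by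
  haveI := G.countableV
  have hA : A = obs G k ⁻¹' (obs G k '' A) := by
    apply Set.Subset.antisymm
    · exact Set.subset_preimage_image _ _
    · rintro y ⟨z, hz, hq⟩
      exact h (fun i h1 h2 => obs_eq_win G hq i h1 h2) hz
  rw [hA, ← Set.biUnion_of_singleton (obs G k '' A), Set.preimage_iUnion₂]
  exact MeasurableSet.biUnion (Set.to_countable _) fun t _ => measurableSet_fiber G k t

lemma Win.compare {k : ℕ} {A : Set G.Space} (h : Win G k A)
    (ν ρ : MeasureTheory.Measure G.Space) (c : ENNReal)
    (hcyl : ∀ z ∈ A, ν (cylZ G z (-(k : ℤ)) k) ≤ c * ρ (cylZ G z (-(k : ℤ)) k)) :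
    ν A ≤ c * ρ A := by
  haveI := G.countableV
  set B : (Fin (2 * k + 1) → G.V) → Set G.Space := fun t => A ∩ obs G k ⁻¹' {t} with hB
  have hAB : A = ⋃ t, B t := by
    ext y
    simp only [Set.mem_iUnion, hB, Set.mem_inter_iff, Set.mem_preimage, Set.mem_singleton_iff]
    exact ⟨fun hy => ⟨obs G k y, hy, rfl⟩, fun ⟨t, hy, _⟩ => hy⟩
  have hBmeas : ∀ t, MeasurableSet (B t) := fun t =>
    h.measurableSet.inter (measurableSet_fiber G k t)
  have hdisj : Pairwise (Function.onFun Disjoint B) := by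
    intro s t hst
    refine Set.disjoint_left.2 fun y hys hyt => hst ?_
    rw [← hys.2, ← hyt.2]
  have hterm : ∀ t, ν (B t) ≤ c * ρ (B t) := by
    intro t
    rcases Set.eq_empty_or_nonempty (B t) with hBe | ⟨z, hz⟩
    · simp [hBe]
    · have ht : obs G k z = t := hz.2
      have hcyl_sub : cylZ G z (-(k : ℤ)) k ⊆ A := by
        rw [← fiber_eq_cylZ]
        rintro y (hy : obs G k y = obs G k z)
        exact h (fun i h1 h2 => (obs_eq_win G hy i h1 h2).symm) hz.1
      have hBt : B t = cylZ G z (-(k : ℤ)) k := by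
        rw [hB]
        simp only [← ht, fiber_eq_cylZ]
        exact Set.inter_eq_self_of_subset_right hcyl_sub
      rw [hBt]
      exact hcyl z hz.1
  calc ν A = ∑' t, ν (B t) := by rw [hAB, MeasureTheory.measure_iUnion hdisj hBmeas]
    _ ≤ ∑' t, c * ρ (B t) := ENNReal.tsum_le_tsum hterm
    _ = c * ∑' t, ρ (B t) := ENNReal.tsum_mul_left
    _ = c * ρ A := by rw [hAB, MeasureTheory.measure_iUnion hdisj hBmeas]

lemma Alg.measurableSet {A : Set G.Space} (h : A ∈ Alg G) : MeasurableSet A :=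
  h.choose_spec.measurableSet

variable (G)

lemma generateFrom_Alg :
    (inferInstance : MeasurableSpace G.Space) = MeasurableSpace.generateFrom (Alg G) := by
  apply le_antisymm
  · show MeasurableSpace.comap (Subtype.val) MeasurableSpace.pi ≤ _
    rw [MeasurableSpace.pi, MeasurableSpace.comap_iSup]
    apply iSup_le
    intro i
    rw [MeasurableSpace.comap_comp]
    intro s hs
    rw [MeasurableSpace.measurableSet_comap] at hs
    obtain ⟨s', -, rfl⟩ := hs
    apply MeasurableSpace.measurableSet_generateFrom
    refine ⟨i.natAbs, fun z y hzy hz => ?_⟩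
    have h2 : z.1 i = y.1 i := hzy i (by omega) (by omega)
    show y.1 i ∈ s'
    rw [← h2]
    exact hz
  · exact MeasurableSpace.generateFrom_le fun A hA => Alg.measurableSet hA


/-- The pushforward of the product of two copies of `ν` restricted to `[v]` under the
Smale bracket. -/
noncomputable def rho (ν : Measure G.Space) (v : G.V) : Measure G.Space :=
  Measure.map (fun p : G.Space × G.Space => bracket G p.1 p.2)
    ((ν.restrict {z : G.Space | z.1 0 = v}).prod (ν.restrict {z : G.Space | z.1 0 = v}))

lemma measurableSet_coordSet (v : G.V) : MeasurableSet {z : G.Space | z.1 0 = v} :=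
  measurableSet_eqcoord G (measurable_coord G 0) measurable_const

instance rho_finite (ν : Measure G.Space) [IsFiniteMeasure ν] (v : G.V) :
    IsFiniteMeasure (rho G ν v) := by
  constructor
  rw [rho, Measure.map_apply (measurable_bracket2 G) MeasurableSet.univ, Set.preimage_univ]
  exact measure_lt_top _ _

lemma star_eq_rho (ν : Measure G.Space) [IsFiniteMeasure ν] (x y : G.Space)
    (hxy : x.1 0 = y.1 0) {E : Set G.Space} (hE : MeasurableSet E) :
    star G (nuS G ν x) (nuU G ν y) E = rho G ν (x.1 0) E := by
  set s : Set G.Space := {z : G.Space | z.1 0 = x.1 0} with hs_def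
  have hs : MeasurableSet s := measurableSet_coordSet G (x.1 0)
  have hsy : {z : G.Space | z.1 0 = y.1 0} = s := by
    ext z; rw [hs_def]; simp only [Set.mem_setOf_eq, hxy]
  have hbr2 : Measurable (fun p : G.Space × G.Space => bracket G p.1 p.2) :=
    measurable_bracket2 G
  have hfx : Measurable (fun z : G.Space => bracket G z x) := measurable_bracket_left G x
  have hgy : Measurable (fun z : G.Space => bracket G y z) := measurable_bracket_right G y
  have hind : Measurable fun p : G.Space × G.Space =>
      E.indicator (fun _ => (1 : ENNReal)) (bracket G p.1 p.2) :=
    (measurable_const.indicator hE).comp hbr2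
  haveI : IsFiniteMeasure (nuS G ν x) := by
    constructor
    rw [nuS, Measure.map_apply hfx MeasurableSet.univ, Set.preimage_univ]
    exact measure_lt_top _ _
  have step1 : star G (nuS G ν x) (nuU G ν y) E =
      ∫⁻ b, (∫⁻ x', E.indicator (fun _ => (1 : ENNReal)) (bracket G x' (bracket G y b))
        ∂nuS G ν x) ∂ν.restrict s := by
    rw [star, nuU, hsy]
    exact lintegral_map (Measurable.lintegral_prod_left hind) hgy
  have step2 : ∀ b : G.Space,
      (∫⁻ x', E.indicator (fun _ => (1 : ENNReal)) (bracket G x' (bracket G y b))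
        ∂nuS G ν x) =
      ∫⁻ a, E.indicator (fun _ => (1 : ENNReal)) (bracket G (bracket G a x) (bracket G y b))
        ∂ν.restrict s := by
    intro b
    rw [nuS]
    exact lintegral_map ((measurable_const.indicator hE).comp
      (measurable_bracket_left G (bracket G y b))) hfx
  have step3 : (∫⁻ b, (∫⁻ a, E.indicator (fun _ => (1 : ENNReal))
          (bracket G (bracket G a x) (bracket G y b)) ∂ν.restrict s) ∂ν.restrict s) =
      ∫⁻ b, (∫⁻ a, E.indicator (fun _ => (1 : ENNReal)) (bracket G a b) ∂ν.restrict s)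
        ∂ν.restrict s := by
    apply lintegral_congr_ae
    filter_upwards [ae_restrict_mem hs] with b hb
    apply lintegral_congr_ae
    filter_upwards [ae_restrict_mem hs] with a ha
    rw [bracket_bracket G x y a b hxy ha (hb.trans hxy)]
  have hpre : (fun p : G.Space × G.Space =>
      E.indicator (fun _ => (1 : ENNReal)) (bracket G p.1 p.2)) =
      ((fun p : G.Space × G.Space => bracket G p.1 p.2) ⁻¹' E).indicator (fun _ => 1) := by
    funext p
    simp only [Set.indicator_apply, Set.mem_preimage]
  have step4 : (∫⁻ b, (∫⁻ a, E.indicator (fun _ => (1 : ENNReal)) (bracket G a b)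
        ∂ν.restrict s) ∂ν.restrict s) = rho G ν (x.1 0) E := by
    have step4' : lintegral ((ν.restrict s).prod (ν.restrict s))
        ((((fun p : G.Space × G.Space => bracket G p.1 p.2) ⁻¹' E)).indicator fun _ => 1) =
        ((ν.restrict s).prod (ν.restrict s))
          ((fun p : G.Space × G.Space => bracket G p.1 p.2) ⁻¹' E) :=
      lintegral_indicator_one (hbr2 hE)
    rw [← lintegral_prod_symm _ hind.aemeasurable, hpre, step4', rho,
      Measure.map_apply hbr2 hE]
  rw [step1]
  rw [lintegral_congr fun b => step2 b]
  rw [step3, step4]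

lemma rho_cylZ (ν : Measure G.Space) [IsFiniteMeasure ν] (v : G.V) (z : G.Space)
    (hz : z.1 0 = v) (m n : ℤ) (hm : m ≤ 0) (hn : 0 ≤ n) :
    rho G ν v (cylZ G z m n) = ν (cylZ G z m 0) * ν (cylZ G z 0 n) := by
  set s : Set G.Space := {z : G.Space | z.1 0 = v} with hs_def
  have hbr2 : Measurable (fun p : G.Space × G.Space => bracket G p.1 p.2) :=
    measurable_bracket2 G
  have hcyl := measurableSet_cylZ G z m n
  rw [rho, Measure.map_apply hbr2 hcyl, Measure.prod_restrict,
    Measure.restrict_apply (hbr2 hcyl)]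
  have hset : ((fun p : G.Space × G.Space => bracket G p.1 p.2) ⁻¹' cylZ G z m n) ∩ s ×ˢ s =
      (cylZ G z m 0) ×ˢ (cylZ G z 0 n) := by
    ext ⟨a, b⟩
    simp only [Set.mem_inter_iff, Set.mem_preimage, Set.mem_prod]
    constructor
    · rintro ⟨hbr, ha, hb⟩
      have hab : a.1 0 = b.1 0 := by
        rw [hs_def] at ha hb
        exact ha.trans hb.symm
      have hbrv : ∀ j : ℤ, (bracket G a b).1 j = if j ≤ 0 then a.1 j else b.1 j := fun j => by
        rw [bracket_val, if_pos hab]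
      constructor
      · intro i h1 h2
        have := hbr i h1 (h2.trans hn)
        rwa [hbrv i, if_pos h2] at this
      · intro i h1 h2
        by_cases h0 : i ≤ 0
        · have hi : i = 0 := le_antisymm h0 h1
          subst hi
          exact (hb : b.1 0 = v).trans hz.symm
        · have := hbr i (hm.trans h1) h2
          rwa [hbrv i, if_neg h0] at this
    · rintro ⟨ha, hb⟩
      have ha0 : a.1 0 = z.1 0 := ha 0 hm le_rfl
      have hb0 : b.1 0 = z.1 0 := hb 0 le_rfl hn
      have hab : a.1 0 = b.1 0 := ha0.trans hb0.symm
      have hbrv : ∀ j : ℤ, (bracket G a b).1 j = if j ≤ 0 then a.1 j else b.1 j := fun j => by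
        rw [bracket_val, if_pos hab]
      refine ⟨?_, ?_, ?_⟩
      · intro i h1 h2
        rw [hbrv i]
        by_cases h0 : i ≤ 0
        · rw [if_pos h0]; exact ha i h1 h0
        · rw [if_neg h0]; exact hb i (by omega) h2
      · exact ha0.trans hz
      · exact hb0.trans hz
  rw [hset, Measure.prod_prod]


open scoped symmDiff in
lemma approx_le (μ1 μ2 : Measure G.Space) [IsFiniteMeasure μ1] [IsFiniteMeasure μ2]
    (c : ENNReal) (hc : c ≠ ⊤) (S : Set G.Space) (hS : S ∈ Alg G)
    (hwin : ∀ A ∈ Alg G, A ⊆ S → μ1 A ≤ c * μ2 A)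
    {E : Set G.Space} (hE : MeasurableSet E) (hES : E ⊆ S) : μ1 E ≤ c * μ2 E := by
  have hdense := Measure.MeasureDense.of_generateFrom_isSetAlgebra_finite
    (μ := μ1 + μ2) isSetAlgebra_Alg (generateFrom_Alg G)
  apply ENNReal.le_of_forall_pos_le_add
  intro ε hε _
  set η : ENNReal := (ε : ENNReal) / (c + 1) with hη_def
  have hη_ne_top : η ≠ ⊤ := by
    refine ne_of_lt (lt_of_le_of_lt (ENNReal.div_le_div_left
      (le_add_self : 1 ≤ c + 1) _) ?_)
    rw [div_one]
    exact ENNReal.coe_lt_top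
  have hη_pos : 0 < η := by
    apply ENNReal.div_pos
    · exact_mod_cast hε.ne'
    · exact (ENNReal.add_lt_top.2 ⟨hc.lt_top, ENNReal.one_lt_top⟩).ne
  set δ : ℝ := η.toReal with hδ_def
  have hδ_pos : 0 < δ := ENNReal.toReal_pos hη_pos.ne' hη_ne_top
  obtain ⟨A, hA, hAsym⟩ := hdense.approx E hE (measure_ne_top _ _) δ hδ_pos
  rw [hδ_def, ENNReal.ofReal_toReal hη_ne_top] at hAsym
  set A' := A ∩ S with hA'_def
  have hA' : A' ∈ Alg G := isSetAlgebra_Alg.inter_mem hA hS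
  have hsub : E ∆ A' ⊆ E ∆ A := by
    rw [Set.symmDiff_def, Set.symmDiff_def]
    apply Set.union_subset_union
    · rintro t ⟨ht, htA'⟩
      exact ⟨ht, fun hAt => htA' ⟨hAt, hES ht⟩⟩
    · exact Set.diff_subset_diff_left Set.inter_subset_left
  have h1lt : μ1 (E ∆ A') ≤ η := by
    refine le_trans (measure_mono hsub) (le_trans ?_ hAsym.le)
    exact Measure.le_iff'.1 (Measure.le_add_right le_rfl) _
  have h2lt : μ2 (E ∆ A') ≤ η := by
    refine le_trans (measure_mono hsub) (le_trans ?_ hAsym.le)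
    exact Measure.le_iff'.1 (Measure.le_add_left le_rfl) _
  have hEsub : E ⊆ A' ∪ E ∆ A' := by
    intro t ht
    by_cases htA : t ∈ A'
    · exact Or.inl htA
    · exact Or.inr (Or.inl ⟨ht, htA⟩)
  have hA'sub : A' ⊆ E ∪ E ∆ A' := by
    intro t ht
    by_cases htE : t ∈ E
    · exact Or.inl htE
    · exact Or.inr (Or.inr ⟨ht, htE⟩)
  calc μ1 E ≤ μ1 A' + μ1 (E ∆ A') :=
        le_trans (measure_mono hEsub) (measure_union_le _ _)
    _ ≤ c * μ2 A' + η := add_le_add (hwin A' hA' Set.inter_subset_right) h1lt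
    _ ≤ c * (μ2 E + μ2 (E ∆ A')) + η := by
        refine add_le_add_left (mul_le_mul_right ?_ c) η
        exact le_trans (measure_mono hA'sub) (measure_union_le _ _)
    _ ≤ c * (μ2 E + η) + η := by
        exact add_le_add_left (mul_le_mul_right (add_le_add_right h2lt _) c) η
    _ = c * μ2 E + (c + 1) * η := by ring
    _ ≤ c * μ2 E + ε := add_le_add_right ENNReal.mul_div_le _


end MarkovGraph

open MarkovGraph in
/-- A quasi-product bound on cylinders implies the local product
structure: the Smale product ν^s_x ⋆ ν^u_y is comparable with ν on two-cylinders, and in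
particular it is mutually absolutely continuous with ν restricted to [v]. -/
theorem statement9 (G : MarkovGraph) (hTrans : ∀ u v : G.V,
      ∃ (k : ℕ) (w : ℕ → G.V), w 0 = u ∧ w k = v ∧ ∀ i < k, G.E (w i) (w (i + 1)))
    (ν : Measure G.Space) (hνp : IsProbabilityMeasure ν)
    (hνinv : MeasurePreserving (fun z => G.shift z) ν ν)
    (hνpos : ∀ (x : G.Space) (a b : ℤ), 0 < ν (cylZ G x a b))
    (C : G.V → G.V → ℝ) (hC : ∀ v w, G.E v w → 1 < C v w)
    (hbound : ∀ (x : G.Space) (m n : ℤ), m < 0 → 0 < n →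
      ν (cylZ G x m n) ≤
          ENNReal.ofReal (C (x.1 0) (x.1 1)) * (ν (cylZ G x m 0) * ν (cylZ G x 0 n)) ∧
      ν (cylZ G x m 0) * ν (cylZ G x 0 n) ≤
          ENNReal.ofReal (C (x.1 0) (x.1 1)) * ν (cylZ G x m n)) :
    ∀ x y : G.Space, x.1 0 = y.1 0 →
      (∀ (w : G.V) (E : Set G.Space), MeasurableSet E →
        (∀ z ∈ E, z.1 0 = x.1 0 ∧ z.1 1 = w) →
        ENNReal.ofReal ((C (x.1 0) w)⁻¹) * star G (nuS G ν x) (nuU G ν y) E ≤ ν E ∧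
        ν E ≤ ENNReal.ofReal (C (x.1 0) w) * star G (nuS G ν x) (nuU G ν y) E) ∧
      (∀ E : Set G.Space, MeasurableSet E → (∀ z ∈ E, z.1 0 = x.1 0) →
        (star G (nuS G ν x) (nuU G ν y) E = 0 ↔ ν E = 0)) := by
  intro x y hxy
  haveI : IsProbabilityMeasure ν := hνp
  haveI : IsFiniteMeasure ν := inferInstance
  haveI := G.countableV
  -- The main comparison between `ν` and the bracket product measure `rho`.
  have main : ∀ (w : G.V) (E : Set G.Space), MeasurableSet E →
      (∀ z ∈ E, z.1 0 = x.1 0 ∧ z.1 1 = w) →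
      ν E ≤ ENNReal.ofReal (C (x.1 0) w) * rho G ν (x.1 0) E ∧
      rho G ν (x.1 0) E ≤ ENNReal.ofReal (C (x.1 0) w) * ν E := by
    intro w E hE hES
    set S : Set G.Space := {z : G.Space | z.1 0 = x.1 0 ∧ z.1 1 = w} with hS_def
    have hSmem : S ∈ Alg G := by
      refine ⟨1, fun z y' hzy hz => ?_⟩
      constructor
      · rw [← hzy 0 (by omega) (by omega)]
        exact hz.1
      · rw [← hzy 1 (by omega) (by omega)]
        exact hz.2
    have hESS : E ⊆ S := fun z hz => hES z hz
    have hcyl : ∀ z : G.Space, z ∈ S → ∀ k : ℕ, 1 ≤ k →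
        ν (cylZ G z (-(k : ℤ)) k) ≤
          ENNReal.ofReal (C (x.1 0) w) * rho G ν (x.1 0) (cylZ G z (-(k : ℤ)) k) ∧
        rho G ν (x.1 0) (cylZ G z (-(k : ℤ)) k) ≤
          ENNReal.ofReal (C (x.1 0) w) * ν (cylZ G z (-(k : ℤ)) k) := by
      intro z hz k hk
      have hm : -(k : ℤ) < 0 := by omega
      have hn : 0 < (k : ℤ) := by omega
      have hb := hbound z (-(k : ℤ)) k hm hn
      have hr : rho G ν (x.1 0) (cylZ G z (-(k : ℤ)) k) =
          ν (cylZ G z (-(k : ℤ)) 0) * ν (cylZ G z 0 k) :=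
        rho_cylZ G ν (x.1 0) z hz.1 _ _ (by omega) (by omega)
      rw [hz.1, hz.2] at hb
      rw [hr]
      exact hb
    constructor
    · refine approx_le G ν (rho G ν (x.1 0)) _ ENNReal.ofReal_ne_top S hSmem ?_ hE hESS
      intro A hA hAS
      obtain ⟨k, hk⟩ := hA
      refine (hk.mono (le_max_left k 1)).compare ν (rho G ν (x.1 0)) _ ?_
      intro z hzA
      exact (hcyl z (hAS hzA) (max k 1) (le_max_right k 1)).1
    · refine approx_le G (rho G ν (x.1 0)) ν _ ENNReal.ofReal_ne_top S hSmem ?_ hE hESS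
      intro A hA hAS
      obtain ⟨k, hk⟩ := hA
      refine (hk.mono (le_max_left k 1)).compare (rho G ν (x.1 0)) ν _ ?_
      intro z hzA
      exact (hcyl z (hAS hzA) (max k 1) (le_max_right k 1)).2
  refine ⟨?_, ?_⟩
  · intro w E hE hES
    have hstar := star_eq_rho G ν x y hxy hE
    obtain ⟨h1, h2⟩ := main w E hE hES
    rcases Set.eq_empty_or_nonempty E with rfl | ⟨z0, hz0⟩
    · rw [hstar]
      constructor
      · simp
      · simp
    · have hedge : G.E (x.1 0) w := by
        have h2' := z0.2 0
        rw [(hES z0 hz0).1, show (0 : ℤ) + 1 = 1 from rfl, (hES z0 hz0).2] at h2'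
        exact h2'
      have hC1 : 1 < C (x.1 0) w := hC _ _ hedge
      have hC0 : 0 < C (x.1 0) w := lt_trans one_pos hC1
      constructor
      · rw [hstar]
        calc ENNReal.ofReal (C (x.1 0) w)⁻¹ * rho G ν (x.1 0) E
            ≤ ENNReal.ofReal (C (x.1 0) w)⁻¹ * (ENNReal.ofReal (C (x.1 0) w) * ν E) :=
              mul_le_mul_right h2 _
          _ = ENNReal.ofReal ((C (x.1 0) w)⁻¹ * C (x.1 0) w) * ν E := by
              rw [← mul_assoc, ← ENNReal.ofReal_mul (inv_nonneg.2 hC0.le)]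
          _ = ν E := by
              rw [inv_mul_cancel₀ hC0.ne', ENNReal.ofReal_one, one_mul]
      · rw [hstar]
        exact h1
  · intro E hE hE0
    rw [star_eq_rho G ν x y hxy hE]
    set Ew : G.V → Set G.Space := fun w => E ∩ {z : G.Space | z.1 1 = w} with hEw
    have hdec : E = ⋃ w, Ew w := by
      ext z
      simp only [hEw, Set.mem_iUnion, Set.mem_inter_iff, Set.mem_setOf_eq]
      exact ⟨fun hz => ⟨z.1 1, hz, rfl⟩, fun ⟨w, hz, _⟩ => hz⟩
    have hmw : ∀ w, MeasurableSet (Ew w) := fun w =>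
      hE.inter (measurableSet_eqcoord G (measurable_coord G 1) measurable_const)
    have hprop : ∀ w, ∀ z ∈ Ew w, z.1 0 = x.1 0 ∧ z.1 1 = w := fun w z hz =>
      ⟨hE0 z hz.1, hz.2⟩
    have hdisj : Pairwise (Function.onFun Disjoint Ew) := by
      intro u u' huu'
      refine Set.disjoint_left.2 fun z hz hz' => huu' ?_
      rw [← hz.2, ← hz'.2]
    have hνs : ν E = ∑' w, ν (Ew w) := by
      conv_lhs => rw [hdec]
      exact measure_iUnion hdisj hmw
    have hρs : rho G ν (x.1 0) E = ∑' w, rho G ν (x.1 0) (Ew w) := by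
      conv_lhs => rw [hdec]
      exact measure_iUnion hdisj hmw
    constructor
    · intro h0
      rw [hνs]
      refine ENNReal.tsum_eq_zero.2 fun w => ?_
      have hle := (main w (Ew w) (hmw w) (hprop w)).1
      have hρw : rho G ν (x.1 0) (Ew w) = 0 :=
        measure_mono_null Set.inter_subset_left h0
      rw [hρw, mul_zero] at hle
      exact le_antisymm hle zero_le
    · intro h0
      rw [hρs]
      refine ENNReal.tsum_eq_zero.2 fun w => ?_
      have hle := (main w (Ew w) (hmw w) (hprop w)).2
      have hνw : ν (Ew w) = 0 :=
        measure_mono_null Set.inter_subset_left h0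
      rw [hνw, mul_zero] at hle
      exact le_antisymm hle zero_le
end
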